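/- arXiv:1909.09684 — 4 statements merged into one kernel-verified Lean document; each statement's English description precedes it below -/
import Mathlib

section
/- On the elliptic curve E''₁₅ : y² = x³ − 60051888x + 82842141312 over ℚ, the pairs (852, 179712) and (−3468, 499392) are ℚ-rational points, each of infinite order in the group of ℚ-rational points; in particular the group of ℚ-rational points of E''₁₅ is infinite. -/
/-- The elliptic curve `E''₁₅ : y² = x³ − 60051888x + 82842141312` over `ℚ`,
in affine coordinates. -/
noncomputable def E15'' : WeierstrassCurve.Affine ℚ := ⟨0, 0, 0, -60051888, 82842141312⟩

namespace E15aux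

open WeierstrassCurve.Affine

lemma ha1 : E15''.a₁ = 0 := rfl
lemma ha2 : E15''.a₂ = 0 := rfl
lemma ha3 : E15''.a₃ = 0 := rfl
lemma ha4 : E15''.a₄ = -60051888 := rfl
lemma ha6 : E15''.a₆ = 82842141312 := rfl

lemma equation_iff'' (x y : ℚ) :
    E15''.Equation x y ↔ y ^ 2 = x ^ 3 + (-60051888) * x + 82842141312 := by
  rw [WeierstrassCurve.Affine.equation_iff, ha1, ha2, ha3, ha4, ha6]
  constructor <;> intro h <;> linarith

lemma negY'' (x y : ℚ) : E15''.negY x y = -y := by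
  rw [WeierstrassCurve.Affine.negY, ha1, ha3]; ring

lemma addX'' (x₁ x₂ L : ℚ) : E15''.addX x₁ x₂ L = L ^ 2 - x₁ - x₂ := by
  rw [WeierstrassCurve.Affine.addX, ha1, ha2]; ring

/-- The descent function attached to a rational two-torsion abscissa `e`. -/
noncomputable def psi (e c : ℚ) : E15''.Point → ℚ
  | .zero => 1
  | @WeierstrassCurve.Affine.Point.some _ _ _ x _ _ => if x = e then c else x - e

@[simp] lemma psi_zero (e c : ℚ) : psi e c 0 = 1 := rfl

@[simp] lemma psi_some (e c : ℚ) {x y : ℚ} (h : E15''.Nonsingular x y) :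
    psi e c (.some _ _ h) = if x = e then c else x - e := rfl

lemma psi_ne_zero (e c : ℚ) (hc0 : c ≠ 0) (P : E15''.Point) : psi e c P ≠ 0 := by
  rcases P with _ | @⟨x, y, h⟩
  · exact one_ne_zero
  · rw [psi_some]
    split
    · exact hc0
    · exact sub_ne_zero.mpr ‹_›

/-! ### Pure algebra lemmas -/

lemma core (A B e c x y L : ℚ) (he : e ^ 3 + A * e + B = 0) (hc : c = 3 * e ^ 2 + A)
    (hE : y ^ 2 = x ^ 3 + A * x + B) (hL : L * (x - e) = y) :
    (x - e) * ((x - e) * (L ^ 2 - x - 2 * e) - c) = 0 := by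
  subst hc
  linear_combination (L * (x - e) + y) * hL + hE + he

lemma secant (A B e x₁ y₁ x₂ y₂ L : ℚ) (he : e ^ 3 + A * e + B = 0)
    (hE₁ : y₁ ^ 2 = x₁ ^ 3 + A * x₁ + B) (hE₂ : y₂ ^ 2 = x₂ ^ 3 + A * x₂ + B)
    (hL : L * (x₁ - x₂) = y₁ - y₂) (hx : x₁ ≠ x₂) :
    (x₁ - e) * (x₂ - e) * ((L ^ 2 - x₁ - x₂) - e) = (L * (e - x₁) + y₁) ^ 2 := by
  have hd : x₁ - x₂ ≠ 0 := sub_ne_zero.mpr hx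
  have key : (x₁ - x₂) ^ 2 *
      ((x₁ - e) * (x₂ - e) * ((L ^ 2 - x₁ - x₂) - e) - (L * (e - x₁) + y₁) ^ 2) = 0 := by
    linear_combination (x₂ - e) * (x₁ - x₂) * hE₁ - (x₁ - e) * (x₁ - x₂) * hE₂ +
      (x₁ - e) * ((x₂ - x₁) * (L * (x₁ - x₂) + y₁ - y₂) + 2 * y₁ * (x₁ - x₂)) * hL -
      (x₁ - x₂) ^ 2 * he
  rcases mul_eq_zero.mp key with h | h
  · exact absurd h (pow_ne_zero 2 hd)
  · linarith [h]

lemma tangent (A B e x₁ y₁ L : ℚ) (he : e ^ 3 + A * e + B = 0)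
    (hE₁ : y₁ ^ 2 = x₁ ^ 3 + A * x₁ + B) (hT : L * (2 * y₁) = 3 * x₁ ^ 2 + A) :
    (x₁ - e) * (x₁ - e) * ((L ^ 2 - x₁ - x₁) - e) = (L * (e - x₁) + y₁) ^ 2 := by
  linear_combination (x₁ - e) * hT - hE₁ - he

/-! ### Square-cancellation lemmas -/

lemma isSquare_of_mul_sq {a b : ℚ} (hb : b ≠ 0) (h : IsSquare (a * b ^ 2)) : IsSquare a := by
  obtain ⟨r, hr⟩ := h
  exact ⟨r / b, by field_simp; linear_combination hr⟩

lemma isSquare_of_mul {a b : ℚ} (hb : b ≠ 0) (hab : IsSquare (a * b)) (h : IsSquare b) :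
    IsSquare a := by
  obtain ⟨r, hr⟩ := hab
  obtain ⟨s, hs⟩ := h
  have hs0 : s ≠ 0 := by rintro rfl; rw [mul_zero] at hs; exact hb hs
  refine ⟨r / s, ?_⟩
  field_simp
  linear_combination hr - a * hs

/-! ### Non-squareness of suitable rationals -/

lemma not_isSquare_neg {q : ℚ} (hq : q < 0) : ¬ IsSquare q := by
  rintro ⟨r, hr⟩
  nlinarith [mul_self_nonneg r]

lemma not_isSquare_cast {N k : ℤ} (hk : 0 ≤ k) (h1 : k * k < N) (h2 : N < (k + 1) * (k + 1)) :
    ¬ IsSquare ((N : ℚ)) := by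
  rintro ⟨r, hr⟩
  have hden : r.den * r.den = 1 := by
    have h := Rat.mul_self_den r
    rw [← hr, Rat.den_intCast] at h
    exact h.symm
  have hden1 : r.den = 1 := Nat.dvd_one.mp ⟨r.den, hden.symm⟩
  have hz : (r.num : ℚ) = r := by
    rw [← Rat.num_div_den r, hden1]; norm_num
  set z := r.num with hzdef
  have hzz : z * z = N := by
    have : ((z * z : ℤ) : ℚ) = ((N : ℤ) : ℚ) := by push_cast [hz]; linarith [hr]
    exact_mod_cast this
  have e1 : 0 ≤ (z - k) * (z - k - 1) := by
    rcases le_or_gt z k with h | h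
    · have := mul_nonneg (by omega : (0 : ℤ) ≤ k - z) (by omega : (0 : ℤ) ≤ k + 1 - z)
      nlinarith [this]
    · exact mul_nonneg (by omega) (by omega)
  have e2 : 0 ≤ (z + k) * (z + k + 1) := by
    rcases le_or_gt z (-k - 1) with h | h
    · have := mul_nonneg (by omega : (0 : ℤ) ≤ -z - k) (by omega : (0 : ℤ) ≤ -z - k - 1)
      nlinarith [this]
    · exact mul_nonneg (by omega) (by omega)
  nlinarith [e1, e2, hzz, mul_pos (by linarith : (0 : ℤ) < N - k * k)
    (by linarith : (0 : ℤ) < (k + 1) * (k + 1) - N)]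

/-! ### Multiplicativity of `psi` up to squares -/

set_option maxHeartbeats 1000000 in
lemma psi_mul (e c : ℚ) (he : e ^ 3 + (-60051888) * e + 82842141312 = 0)
    (hc : c = 3 * e ^ 2 + (-60051888)) (hc0 : c ≠ 0) (P Q : E15''.Point) :
    IsSquare (psi e c (P + Q) * psi e c P * psi e c Q) := by
  rcases P with _ | @⟨x₁, y₁, h₁⟩
  · rw [show (WeierstrassCurve.Affine.Point.zero : E15''.Point) = 0 from rfl, zero_add, psi_zero]
    exact ⟨psi e c Q, by ring⟩
  rcases Q with _ | @⟨x₂, y₂, h₂⟩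
  · rw [show (WeierstrassCurve.Affine.Point.zero : E15''.Point) = 0 from rfl, add_zero, psi_zero]
    exact ⟨psi e c (.some _ _ h₁), by ring⟩
  have hE₁ : y₁ ^ 2 = x₁ ^ 3 + (-60051888) * x₁ + 82842141312 := (equation_iff'' x₁ y₁).mp h₁.1
  have hE₂ : y₂ ^ 2 = x₂ ^ 3 + (-60051888) * x₂ + 82842141312 := (equation_iff'' x₂ y₂).mp h₂.1
  by_cases hY : x₁ = x₂ ∧ y₁ = E15''.negY x₂ y₂
  · obtain ⟨hx, hy⟩ := hY
    rw [WeierstrassCurve.Affine.Point.add_of_Y_eq hx hy, psi_zero, one_mul, psi_some, psi_some]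
    subst hx
    by_cases hxe : x₁ = e
    · rw [if_pos hxe]; exact ⟨c, rfl⟩
    · rw [if_neg hxe]; exact ⟨x₁ - e, rfl⟩
  · have himp : x₁ = x₂ → y₁ ≠ E15''.negY x₂ y₂ := fun hx hy => hY ⟨hx, hy⟩
    rw [WeierstrassCurve.Affine.Point.add_some (fun hxy => himp hxy.1 hxy.2)]
    rw [psi_some, psi_some, psi_some, addX'']
    set L := E15''.slope x₁ x₂ y₁ y₂ with hLdef
    by_cases h1e : x₁ = e
    · -- `P` is the two-torsion point `(e, 0)`
      have hy₁ : y₁ = 0 := by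
        have h0 : y₁ ^ 2 = 0 := by rw [hE₁, h1e]; linarith [he]
        exact pow_eq_zero_iff two_ne_zero |>.mp h0
      have h2e : x₂ ≠ e := by
        intro h2e
        have hy₂ : y₂ = 0 := by
          have h0 : y₂ ^ 2 = 0 := by rw [hE₂, h2e]; linarith [he]
          exact pow_eq_zero_iff two_ne_zero |>.mp h0
        exact himp (h1e.trans h2e.symm) (by rw [negY'', hy₁, hy₂, neg_zero])
      have hx12 : x₁ ≠ x₂ := fun h => h2e (h ▸ h1e)
      have hx2e' : x₂ - e ≠ 0 := sub_ne_zero.mpr h2e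
      have hL : L * (x₂ - e) = y₂ := by
        rw [hLdef, WeierstrassCurve.Affine.slope_of_X_ne hx12, hy₁, h1e]
        have hne' : e - x₂ ≠ 0 := sub_ne_zero.mpr fun h => h2e h.symm
        field_simp
        ring
      have hcore := core (-60051888) 82842141312 e c x₂ y₂ L he hc hE₂ hL
      have hkey : (x₂ - e) * (L ^ 2 - x₂ - 2 * e) = c := by
        rcases mul_eq_zero.mp hcore with h | h
        · exact absurd h hx2e'
        · linarith [h]
      have hne : L ^ 2 - x₁ - x₂ ≠ e := by
        intro h
        apply hc0
        have h0 : L ^ 2 - x₂ - 2 * e = 0 := by linear_combination h + h1e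
        rw [← hkey, h0, mul_zero]
      rw [if_neg hne, if_pos h1e, if_neg h2e]
      exact ⟨c, by linear_combination c * hkey - c * (x₂ - e) * h1e⟩
    · by_cases h2e : x₂ = e
      · -- `Q` is the two-torsion point `(e, 0)`
        have hy₂ : y₂ = 0 := by
          have h0 : y₂ ^ 2 = 0 := by rw [hE₂, h2e]; linarith [he]
          exact pow_eq_zero_iff two_ne_zero |>.mp h0
        have hx12 : x₁ ≠ x₂ := fun h => h1e (h.trans h2e)
        have hx1e' : x₁ - e ≠ 0 := sub_ne_zero.mpr h1e
        have hL : L * (x₁ - e) = y₁ := by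
          rw [hLdef, WeierstrassCurve.Affine.slope_of_X_ne hx12, hy₂, h2e]
          field_simp
          ring
        have hcore := core (-60051888) 82842141312 e c x₁ y₁ L he hc hE₁ hL
        have hkey : (x₁ - e) * (L ^ 2 - x₁ - 2 * e) = c := by
          rcases mul_eq_zero.mp hcore with h | h
          · exact absurd h hx1e'
          · linarith [h]
        have hne : L ^ 2 - x₁ - x₂ ≠ e := by
          intro h
          apply hc0
          have h0 : L ^ 2 - x₁ - 2 * e = 0 := by linear_combination h + h2e
          rw [← hkey, h0, mul_zero]
        rw [if_neg hne, if_neg h1e, if_pos h2e]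
        exact ⟨c, by linear_combination c * hkey - c * (x₁ - e) * h2e⟩
      · -- the generic case: neither point is `(e, 0)`
        have hM : (x₁ - e) * (x₂ - e) * ((L ^ 2 - x₁ - x₂) - e) = (L * (e - x₁) + y₁) ^ 2 := by
          by_cases hx12 : x₁ = x₂
          · have hy12 : y₁ = y₂ :=
              (WeierstrassCurve.Affine.Y_eq_of_X_eq h₁.1 h₂.1 hx12).resolve_right (himp hx12)
            have hyne := himp hx12
            rw [negY''] at hyne
            subst hx12; subst hy12
            have hy0 : y₁ ≠ 0 := fun h0 => hyne (by rw [h0, neg_zero])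
            have hT : L * (2 * y₁) = 3 * x₁ ^ 2 + (-60051888) := by
              rw [hLdef, WeierstrassCurve.Affine.slope_of_Y_ne rfl (by rw [negY'']; exact hyne)]
              rw [ha1, ha2, ha4, negY'']
              rw [div_mul_eq_mul_div, div_eq_iff (by intro hf; exact hy0 (by linarith))]
              ring
            exact tangent (-60051888) 82842141312 e x₁ y₁ L he hE₁ hT
          · have hL : L * (x₁ - x₂) = y₁ - y₂ := by
              rw [hLdef, WeierstrassCurve.Affine.slope_of_X_ne hx12]
              have hne' : x₁ - x₂ ≠ 0 := sub_ne_zero.mpr hx12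
              field_simp
            exact secant (-60051888) 82842141312 e x₁ y₁ x₂ y₂ L he hE₁ hE₂ hL hx12
        by_cases hx3 : L ^ 2 - x₁ - x₂ = e
        · have hr : L * (e - x₁) + y₁ = 0 := by
            have h0 : (L * (e - x₁) + y₁) ^ 2 = 0 := by
              rw [← hM, hx3]; ring
            exact pow_eq_zero_iff two_ne_zero |>.mp h0
          have hL' : L * (x₁ - e) = y₁ := by linear_combination -hr
          have hcore := core (-60051888) 82842141312 e c x₁ y₁ L he hc hE₁ hL'
          have hkey : (x₁ - e) * (L ^ 2 - x₁ - 2 * e) = c := by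
            rcases mul_eq_zero.mp hcore with h | h
            · exact absurd h (sub_ne_zero.mpr h1e)
            · linarith [h]
          rw [if_pos hx3, if_neg h1e, if_neg h2e]
          exact ⟨c, by linear_combination c * hkey - c * (x₁ - e) * hx3⟩
        · rw [if_neg hx3, if_neg h1e, if_neg h2e]
          exact ⟨L * (e - x₁) + y₁, by linear_combination hM⟩

/-! ### Iterated multiplicativity -/

lemma psi_nsmul (e c : ℚ) (he : e ^ 3 + (-60051888) * e + 82842141312 = 0)
    (hc : c = 3 * e ^ 2 + (-60051888)) (hc0 : c ≠ 0) (R : E15''.Point) (n : ℕ) :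
    IsSquare (psi e c (n • R) * (psi e c R) ^ n) := by
  induction n with
  | zero => rw [zero_nsmul, pow_zero, psi_zero, one_mul]; exact IsSquare.one
  | succ n ih =>
    obtain ⟨r, hr⟩ := psi_mul e c he hc hc0 (n • R) R
    obtain ⟨s, hs⟩ := ih
    refine isSquare_of_mul_sq (b := psi e c (n • R)) (psi_ne_zero e c hc0 (n • R)) ⟨r * s, ?_⟩
    rw [succ_nsmul]
    linear_combination (psi e c (n • R) * (psi e c R) ^ n) * hr + r * r * hs

/-! ### Two-torsion points -/

lemma two_torsion (T : E15''.Point) (h0 : T ≠ 0) (h2 : T + T = 0) :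
    ∃ (t : ℚ) (hns : E15''.Nonsingular t 0),
      T = .some _ _ hns ∧ (t = -8364 ∨ t = 1428 ∨ t = 6936) := by
  rcases T with _ | @⟨x, y, h⟩
  · exact absurd WeierstrassCurve.Affine.Point.zero_def h0
  · have hy : y = E15''.negY x y := by
      by_contra hy
      rw [WeierstrassCurve.Affine.Point.add_self_of_Y_ne hy] at h2
      exact WeierstrassCurve.Affine.Point.some_ne_zero _ h2
    rw [negY''] at hy
    have hy0 : y = 0 := by linarith
    subst hy0
    have hE := (equation_iff'' x 0).mp h.1
    have hroots : (x + 8364) * ((x - 1428) * (x - 6936)) = 0 := by linear_combination -hE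
    refine ⟨x, h, rfl, ?_⟩
    rcases mul_eq_zero.mp hroots with h' | h'
    · left; linarith
    · rcases mul_eq_zero.mp h' with h'' | h''
      · right; left; linarith
      · right; right; linarith

/-! ### The main infinite-order criterion -/

lemma infinite_order {x y : ℚ} (h : E15''.Nonsingular x y)
    (hx1 : x ≠ -8364) (hx2 : x ≠ 1428)
    (hodd : ¬ IsSquare (x - -8364) ∨ ¬ IsSquare (x - 1428))
    (hQ1 : ¬ IsSquare ((x - 1428) * (-9792)))
    (hQ2 : ¬ IsSquare ((x - -8364) * 9792))
    (hQ3 : ¬ IsSquare ((x - -8364) * 15300)) :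
    ∀ n : ℤ, n ≠ 0 → n • (WeierstrassCurve.Affine.Point.some _ _ h) ≠ 0 := by
  intro n hn hP
  set R : E15''.Point := .some _ _ h with hR
  have he1 : (-8364 : ℚ) ^ 3 + (-60051888) * (-8364) + 82842141312 = 0 := by norm_num
  have he2 : (1428 : ℚ) ^ 3 + (-60051888) * 1428 + 82842141312 = 0 := by norm_num
  have hc1 : (149817600 : ℚ) = 3 * (-8364 : ℚ) ^ 2 + (-60051888) := by norm_num
  have hc2 : (-53934336 : ℚ) = 3 * (1428 : ℚ) ^ 2 + (-60051888) := by norm_num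
  have hc10 : (149817600 : ℚ) ≠ 0 := by norm_num
  have hc20 : (-53934336 : ℚ) ≠ 0 := by norm_num
  have hψ₁R : psi (-8364) 149817600 R = x - -8364 := by
    rw [hR, psi_some, if_neg hx1]
  have hψ₂R : psi 1428 (-53934336) R = x - 1428 := by
    rw [hR, psi_some, if_neg hx2]
  -- `R` has finite additive order `m`
  have hk0' : n.natAbs ≠ 0 := Int.natAbs_ne_zero.mpr hn
  have hkR : n.natAbs • R = 0 := by
    rcases Int.natAbs_eq n with h' | h'
    · rw [h'] at hP; rwa [natCast_zsmul] at hP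
    · rw [h'] at hP; rwa [neg_zsmul, neg_eq_zero, natCast_zsmul] at hP
  set m := addOrderOf R with hmdef
  have hmdvd : m ∣ n.natAbs := addOrderOf_dvd_of_nsmul_eq_zero hkR
  have hm0 : m ≠ 0 := fun h0 => hk0' (by rwa [h0, zero_dvd_iff] at hmdvd)
  have hmR : m • R = 0 := addOrderOf_nsmul_eq_zero R
  have hsq : ∀ e c : ℚ, e ^ 3 + (-60051888) * e + 82842141312 = 0 →
      c = 3 * e ^ 2 + (-60051888) → c ≠ 0 → IsSquare ((psi e c R) ^ m) := by
    intro e c he hc hc0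
    have hh := psi_nsmul e c he hc hc0 R m
    rwa [hmR, psi_zero, one_mul] at hh
  rcases Nat.even_or_odd m with hev | hod
  · -- even order: there is a two-torsion multiple
    obtain ⟨k, hk⟩ := hev
    have hk0 : k ≠ 0 := by omega
    have hkm : k < m := by omega
    set T := k • R with hTdef
    have hT2 : T + T = 0 := by rw [hTdef, ← add_nsmul, ← hk]; exact hmR
    have hTne : T ≠ 0 := by
      intro h0
      have h0' : k • R = 0 := by rw [← hTdef]; exact h0
      have hdvd := addOrderOf_dvd_of_nsmul_eq_zero h0'
      exact absurd (Nat.le_of_dvd (Nat.pos_of_ne_zero hk0) hdvd) (by omega)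
    obtain ⟨t, hns, hTeq, hts⟩ := two_torsion T hTne hT2
    have main : ∀ e c : ℚ, e ^ 3 + (-60051888) * e + 82842141312 = 0 →
        c = 3 * e ^ 2 + (-60051888) → c ≠ 0 →
        IsSquare (psi e c T) ∨ IsSquare (psi e c R * psi e c T) := by
      intro e c he hc hc0
      rcases Nat.even_or_odd k with hke | hko
      · left
        obtain ⟨j, hj⟩ := hke
        have hTj : T = j • R + j • R := by rw [hTdef, hj, add_nsmul]
        have hh := psi_mul e c he hc hc0 (j • R) (j • R)
        rw [← hTj] at hh
        obtain ⟨r, hr⟩ := hh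
        exact isSquare_of_mul_sq (psi_ne_zero e c hc0 (j • R)) ⟨r, by linear_combination hr⟩
      · right
        obtain ⟨j, hj⟩ := hko
        have hX : R + T = (j + 1) • R + (j + 1) • R := by
          rw [hTdef, show R + k • R = (1 + k) • R by rw [add_nsmul, one_nsmul],
            show 1 + k = (j + 1) + (j + 1) by omega, add_nsmul]
        have hXs : IsSquare (psi e c (R + T)) := by
          have hh := psi_mul e c he hc hc0 ((j + 1) • R) ((j + 1) • R)
          rw [← hX] at hh
          obtain ⟨r, hr⟩ := hh
          exact isSquare_of_mul_sq (psi_ne_zero e c hc0 ((j + 1) • R)) ⟨r, by linear_combination hr⟩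
        obtain ⟨r, hr⟩ := psi_mul e c he hc hc0 R T
        exact isSquare_of_mul (psi_ne_zero e c hc0 (R + T)) ⟨r, by linear_combination hr⟩ hXs
    rcases hts with ht | ht | ht
    · -- `t = -8364`: use the descent at `e = 1428`
      have h2T : psi 1428 (-53934336) T = -9792 := by
        rw [hTeq, psi_some, ht]; norm_num
      rcases main 1428 (-53934336) he2 hc2 hc20 with hs | hs
      · rw [h2T] at hs
        exact not_isSquare_neg (by norm_num) hs
      · rw [h2T, hψ₂R] at hs
        exact hQ1 hs
    · -- `t = 1428`: use the descent at `e = -8364`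
      have h1T : psi (-8364) 149817600 T = 9792 := by
        rw [hTeq, psi_some, ht]; norm_num
      rcases main (-8364) 149817600 he1 hc1 hc10 with hs | hs
      · rw [h1T, show (9792 : ℚ) = ((9792 : ℤ) : ℚ) by norm_num] at hs
        exact not_isSquare_cast (k := 98) (by norm_num) (by norm_num) (by norm_num) hs
      · rw [h1T, hψ₁R] at hs
        exact hQ2 hs
    · -- `t = 6936`: use the descent at `e = -8364`
      have h1T : psi (-8364) 149817600 T = 15300 := by
        rw [hTeq, psi_some, ht]; norm_num
      rcases main (-8364) 149817600 he1 hc1 hc10 with hs | hs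
      · rw [h1T, show (15300 : ℚ) = ((15300 : ℤ) : ℚ) by norm_num] at hs
        exact not_isSquare_cast (k := 123) (by norm_num) (by norm_num) (by norm_num) hs
      · rw [h1T, hψ₁R] at hs
        exact hQ3 hs
  · -- odd order: `psi R` is itself a square for both descents, contradiction
    obtain ⟨k, hk⟩ := hod
    have hsplit : ∀ e c : ℚ, e ^ 3 + (-60051888) * e + 82842141312 = 0 →
        c = 3 * e ^ 2 + (-60051888) → c ≠ 0 → IsSquare (psi e c R) := by
      intro e c he hc hc0
      have hh := hsq e c he hc hc0
      rw [hk] at hh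
      obtain ⟨r, hr⟩ := hh
      refine isSquare_of_mul_sq (b := (psi e c R) ^ k) (pow_ne_zero _ (psi_ne_zero e c hc0 R))
        ⟨r, by linear_combination hr⟩
    rcases hodd with hno | hno
    · exact hno (hψ₁R ▸ hsplit (-8364) 149817600 he1 hc1 hc10)
    · exact hno (hψ₂R ▸ hsplit 1428 (-53934336) he2 hc2 hc20)

end E15aux

open E15aux

/-- The pairs `(852, 179712)` and `(−3468, 499392)` are `ℚ`-rational points of `E''₁₅`,
each of infinite order in the group of `ℚ`-rational points; in particular the group of
`ℚ`-rational points of `E''₁₅` is infinite. -/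
theorem statement2 :
    ∃ (h₁ : E15''.Nonsingular 852 179712) (h₂ : E15''.Nonsingular (-3468) 499392),
      (∀ n : ℤ, n ≠ 0 → n • (WeierstrassCurve.Affine.Point.some _ _ h₁) ≠ 0) ∧
      (∀ n : ℤ, n ≠ 0 → n • (WeierstrassCurve.Affine.Point.some _ _ h₂) ≠ 0) ∧
      Infinite E15''.Point := by
  have h₁ : E15''.Nonsingular 852 179712 := by
    refine (E15''.nonsingular_iff 852 179712).mpr ⟨(equation_iff'' 852 179712).mpr (by norm_num),
      Or.inr ?_⟩
    rw [ha1, ha3]; norm_num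
  have h₂ : E15''.Nonsingular (-3468) 499392 := by
    refine (E15''.nonsingular_iff (-3468) 499392).mpr
      ⟨(equation_iff'' (-3468) 499392).mpr (by norm_num), Or.inr ?_⟩
    rw [ha1, ha3]; norm_num
  have main1 := infinite_order h₁ (by norm_num) (by norm_num)
    (Or.inr (not_isSquare_neg (by norm_num)))
    (by rw [show ((852 : ℚ) - 1428) * (-9792) = ((5640192 : ℤ) : ℚ) by norm_num]
        exact not_isSquare_cast (k := 2374) (by norm_num) (by norm_num) (by norm_num))
    (by rw [show ((852 : ℚ) - -8364) * 9792 = ((90243072 : ℤ) : ℚ) by norm_num]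
        exact not_isSquare_cast (k := 9499) (by norm_num) (by norm_num) (by norm_num))
    (by rw [show ((852 : ℚ) - -8364) * 15300 = ((141004800 : ℤ) : ℚ) by norm_num]
        exact not_isSquare_cast (k := 11874) (by norm_num) (by norm_num) (by norm_num))
  have main2 := infinite_order h₂ (by norm_num) (by norm_num)
    (Or.inl (by
      rw [show ((-3468 : ℚ) - -8364) = ((4896 : ℤ) : ℚ) by norm_num]
      exact not_isSquare_cast (k := 69) (by norm_num) (by norm_num) (by norm_num)))
    (by rw [show ((-3468 : ℚ) - 1428) * (-9792) = ((47941632 : ℤ) : ℚ) by norm_num]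
        exact not_isSquare_cast (k := 6923) (by norm_num) (by norm_num) (by norm_num))
    (by rw [show ((-3468 : ℚ) - -8364) * 9792 = ((47941632 : ℤ) : ℚ) by norm_num]
        exact not_isSquare_cast (k := 6923) (by norm_num) (by norm_num) (by norm_num))
    (by rw [show ((-3468 : ℚ) - -8364) * 15300 = ((74908800 : ℤ) : ℚ) by norm_num]
        exact not_isSquare_cast (k := 8654) (by norm_num) (by norm_num) (by norm_num))
  refine ⟨h₁, h₂, main1, main2, ?_⟩
  refine Infinite.of_injective (fun n : ℕ => n • (WeierstrassCurve.Affine.Point.some _ _ h₁)) ?_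
  intro a b hab
  dsimp only at hab
  by_contra hne
  have hz : ((a : ℤ) - (b : ℤ)) • (WeierstrassCurve.Affine.Point.some _ _ h₁ : E15''.Point) = 0 := by
    rw [sub_zsmul, natCast_zsmul, natCast_zsmul, hab]
    simp
  exact main1 _ (sub_ne_zero.mpr (by exact_mod_cast hne)) hz
end

section
/- There are exactly 4 SL₂(ℤ)-orbits of positive definite integral binary quadratic forms of discriminant −68, represented by the pairwise inequivalent forms x² + 17y², 2x² + 2xy + 9y², 3x² + 2xy + 6y², and 3x² − 2xy + 6y²; every positive definite form of discriminant −68 is equivalent to exactly one of these. -/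
/-- An integral binary quadratic form `Q(x,y) = Ax² + Bxy + Cy²`. -/
structure BQF where
  A : ℤ
  B : ℤ
  C : ℤ

/-- Evaluation of a binary quadratic form. -/
def BQF.eval (Q : BQF) (x y : ℤ) : ℤ := Q.A * x ^ 2 + Q.B * x * y + Q.C * y ^ 2

/-- The discriminant `B² − 4AC` of a binary quadratic form. -/
def BQF.disc (Q : BQF) : ℤ := Q.B ^ 2 - 4 * Q.A * Q.C

/-- A binary quadratic form is positive definite if `A > 0` and its discriminant is negative. -/
def BQF.PosDef (Q : BQF) : Prop := 0 < Q.A ∧ Q.disc < 0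

/-- Two forms are `SL₂(ℤ)`-equivalent if one is obtained from the other by the action
`(Q|γ)(x,y) = Q(ax + by, cx + dy)` for some `γ = [[a,b],[c,d]] ∈ SL₂(ℤ)`. -/
def BQF.Equivalent (Q Q' : BQF) : Prop :=
  ∃ γ : Matrix.SpecialLinearGroup (Fin 2) ℤ, ∀ x y : ℤ,
    Q'.eval x y =
      Q.eval ((γ : Matrix (Fin 2) (Fin 2) ℤ) 0 0 * x + (γ : Matrix (Fin 2) (Fin 2) ℤ) 0 1 * y)
        ((γ : Matrix (Fin 2) (Fin 2) ℤ) 1 0 * x + (γ : Matrix (Fin 2) (Fin 2) ℤ) 1 1 * y)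

namespace BQF

lemma equiv_mk (Q : BQF) (a b c d A' B' C' : ℤ) (h : a * d - b * c = 1)
    (hA : A' = Q.A * a ^ 2 + Q.B * a * c + Q.C * c ^ 2)
    (hB : B' = 2 * Q.A * a * b + Q.B * (a * d + b * c) + 2 * Q.C * c * d)
    (hC : C' = Q.A * b ^ 2 + Q.B * b * d + Q.C * d ^ 2) :
    Q.Equivalent ⟨A', B', C'⟩ := by
  refine ⟨⟨!![a, b; c, d], by simp [Matrix.det_fin_two_of]; linarith⟩, fun x y => ?_⟩
  simp [BQF.eval, Matrix.cons_val_zero, Matrix.cons_val_one, Matrix.head_cons, hA, hB, hC]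
  ring

lemma Equivalent.symm {Q Q' : BQF} (h : Q.Equivalent Q') : Q'.Equivalent Q := by
  obtain ⟨γ, h⟩ := h
  have hdet : γ.1 0 0 * γ.1 1 1 - γ.1 0 1 * γ.1 1 0 = 1 := by
    have := γ.2; rwa [Matrix.det_fin_two] at this
  refine ⟨⟨!![γ.1 1 1, -γ.1 0 1; -γ.1 1 0, γ.1 0 0], by simp [Matrix.det_fin_two_of]; linarith⟩,
    fun x y => ?_⟩
  simp only [Matrix.SpecialLinearGroup.coe_mk, Matrix.cons_val', Matrix.cons_val_zero,
    Matrix.cons_val_one, Matrix.head_cons, Matrix.empty_val', Matrix.cons_val_fin_one,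
    Matrix.head_fin_const, Matrix.of_apply]
  rw [h]
  have e1 : γ.1 0 0 * (γ.1 1 1 * x + -γ.1 0 1 * y) + γ.1 0 1 * (-γ.1 1 0 * x + γ.1 0 0 * y)
      = x := by linear_combination x * hdet
  have e2 : γ.1 1 0 * (γ.1 1 1 * x + -γ.1 0 1 * y) + γ.1 1 1 * (-γ.1 1 0 * x + γ.1 0 0 * y)
      = y := by linear_combination y * hdet
  rw [e1, e2]

lemma Equivalent.trans {Q Q' Q'' : BQF} (h1 : Q.Equivalent Q') (h2 : Q'.Equivalent Q'') :
    Q.Equivalent Q'' := by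
  obtain ⟨γ1, h1⟩ := h1
  obtain ⟨γ2, h2⟩ := h2
  refine ⟨γ1 * γ2, fun x y => ?_⟩
  rw [h2, h1]
  simp only [Matrix.SpecialLinearGroup.coe_mul, Matrix.mul_apply, Fin.sum_univ_two, BQF.eval]
  ring

lemma not_equiv_of {Q Q' : BQF} (n : ℤ) (hq : ∃ x y : ℤ, Q.eval x y = n)
    (hq' : ∀ x y : ℤ, Q'.eval x y ≠ n) : ¬ Q.Equivalent Q' := by
  intro h
  obtain ⟨γ, hγ⟩ := h.symm
  obtain ⟨x, y, hxy⟩ := hq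
  exact hq' _ _ ((hγ x y).symm.trans hxy)

end BQF

lemma sq1 {z : ℤ} (h : z ≠ 0) : 1 ≤ z ^ 2 := by
  rcases h.lt_or_gt with h | h <;> nlinarith

lemma norep229_1 (x y : ℤ) : 2 * x ^ 2 + 2 * x * y + 9 * y ^ 2 ≠ 1 := by
  intro h
  have key : (4 * x + 2 * y) ^ 2 + 68 * y ^ 2 = 8 := by linear_combination 8 * h
  rcases eq_or_ne y 0 with hy | hy
  · subst hy
    rcases eq_or_ne x 0 with hx | hx
    · subst hx; norm_num at key
    · have := sq1 hx; nlinarith [sq_nonneg (4 * x)]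
  · have := sq1 hy; nlinarith [sq_nonneg (4 * x + 2 * y)]

lemma norep326_1 (B x y : ℤ) (hB : B = 2 ∨ B = -2) : 3 * x ^ 2 + B * x * y + 6 * y ^ 2 ≠ 1 := by
  intro h
  have key : (6 * x + B * y) ^ 2 + 68 * y ^ 2 = 12 := by
    rcases hB with hB | hB <;> subst hB <;> linear_combination 12 * h
  rcases eq_or_ne y 0 with hy | hy
  · subst hy
    rcases eq_or_ne x 0 with hx | hx
    · subst hx; norm_num at key
    · have := sq1 hx; nlinarith [sq_nonneg (6 * x)]
  · have := sq1 hy; nlinarith [sq_nonneg (6 * x + B * y)]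

lemma norep326_2 (B x y : ℤ) (hB : B = 2 ∨ B = -2) : 3 * x ^ 2 + B * x * y + 6 * y ^ 2 ≠ 2 := by
  intro h
  have key : (6 * x + B * y) ^ 2 + 68 * y ^ 2 = 24 := by
    rcases hB with hB | hB <;> subst hB <;> linear_combination 12 * h
  rcases eq_or_ne y 0 with hy | hy
  · subst hy
    rcases eq_or_ne x 0 with hx | hx
    · subst hx; norm_num at key
    · have := sq1 hx; nlinarith [sq_nonneg (6 * x)]
  · have := sq1 hy; nlinarith [sq_nonneg (6 * x + B * y)]

lemma rep3sol (x y : ℤ) (h : 3 * x ^ 2 + 2 * x * y + 6 * y ^ 2 = 3) :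
    (x = 1 ∧ y = 0) ∨ (x = -1 ∧ y = 0) := by
  have key : (6 * x + 2 * y) ^ 2 + 68 * y ^ 2 = 36 := by linear_combination 12 * h
  have hy : y = 0 := by
    by_contra hy
    have := sq1 hy; nlinarith [sq_nonneg (6 * x + 2 * y)]
  subst hy
  have hx : (x - 1) * (x + 1) = 0 := by nlinarith
  rcases mul_eq_zero.mp hx with h | h
  · left; omega
  · right; omega

lemma rep6sol (x y : ℤ) (h : 3 * x ^ 2 + 2 * x * y + 6 * y ^ 2 = 6) :
    (x = 0 ∧ y = 1) ∨ (x = 0 ∧ y = -1) := by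
  have key : (6 * x + 2 * y) ^ 2 + 68 * y ^ 2 = 72 := by linear_combination 12 * h
  have hy1 : y ≤ 1 := by nlinarith [sq_nonneg (6 * x + 2 * y), sq_nonneg (y - 1)]
  have hy2 : -1 ≤ y := by nlinarith [sq_nonneg (6 * x + 2 * y), sq_nonneg (y + 1)]
  interval_cases y
  · have hx : x * (3 * x - 2) = 0 := by nlinarith
    rcases mul_eq_zero.mp hx with h | h
    · right; omega
    · omega
  · exfalso
    have h2 : x ≤ 1 := by nlinarith [sq_nonneg (x - 2)]
    have h3 : -1 ≤ x := by nlinarith [sq_nonneg (x + 2)]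
    interval_cases x <;> norm_num at key
  · have hx : x * (3 * x + 2) = 0 := by nlinarith
    rcases mul_eq_zero.mp hx with h | h
    · left; omega
    · omega

lemma reduced_cases (A B C : ℤ) (hA : 0 < A) (hBl : -A ≤ B) (hBu : B < A) (hAC : A ≤ C)
    (hd : B ^ 2 - 4 * A * C = -68) :
    (A = 1 ∧ B = 0 ∧ C = 17) ∨ (A = 2 ∧ B = -2 ∧ C = 9) ∨
    (A = 3 ∧ B = 2 ∧ C = 6) ∨ (A = 3 ∧ B = -2 ∧ C = 6) := by
  have h1 : A ≤ 4 := by nlinarith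
  interval_cases A <;> interval_cases B <;> omega

lemma ne12 : ¬ BQF.Equivalent ⟨1, 0, 17⟩ ⟨2, 2, 9⟩ :=
  BQF.not_equiv_of 1 ⟨1, 0, by norm_num [BQF.eval]⟩
    (fun x y h => norep229_1 x y (by simp only [BQF.eval] at h; linear_combination h))

lemma ne13 : ¬ BQF.Equivalent ⟨1, 0, 17⟩ ⟨3, 2, 6⟩ :=
  BQF.not_equiv_of 1 ⟨1, 0, by norm_num [BQF.eval]⟩
    (fun x y h => norep326_1 2 x y (Or.inl rfl) (by simp only [BQF.eval] at h; linear_combination h))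

lemma ne14 : ¬ BQF.Equivalent ⟨1, 0, 17⟩ ⟨3, -2, 6⟩ :=
  BQF.not_equiv_of 1 ⟨1, 0, by norm_num [BQF.eval]⟩
    (fun x y h => norep326_1 (-2) x y (Or.inr rfl)
      (by simp only [BQF.eval] at h; linear_combination h))

lemma ne23 : ¬ BQF.Equivalent ⟨2, 2, 9⟩ ⟨3, 2, 6⟩ :=
  BQF.not_equiv_of 2 ⟨1, 0, by norm_num [BQF.eval]⟩
    (fun x y h => norep326_2 2 x y (Or.inl rfl) (by simp only [BQF.eval] at h; linear_combination h))

lemma ne24 : ¬ BQF.Equivalent ⟨2, 2, 9⟩ ⟨3, -2, 6⟩ :=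
  BQF.not_equiv_of 2 ⟨1, 0, by norm_num [BQF.eval]⟩
    (fun x y h => norep326_2 (-2) x y (Or.inr rfl)
      (by simp only [BQF.eval] at h; linear_combination h))

lemma ne34 : ¬ BQF.Equivalent ⟨3, 2, 6⟩ ⟨3, -2, 6⟩ := by
  rintro ⟨γ, h⟩
  set a := (γ : Matrix (Fin 2) (Fin 2) ℤ) 0 0 with ha
  set b := (γ : Matrix (Fin 2) (Fin 2) ℤ) 0 1 with hb
  set c := (γ : Matrix (Fin 2) (Fin 2) ℤ) 1 0 with hc
  set d := (γ : Matrix (Fin 2) (Fin 2) ℤ) 1 1 with hd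
  have hdet : a * d - b * c = 1 := by
    have h2 := γ.2
    rw [Matrix.det_fin_two] at h2
    exact h2
  have h1 := h 1 0
  have h2 := h 0 1
  have h3 := h 1 1
  simp only [BQF.eval] at h1 h2 h3
  have e1 : 3 * a ^ 2 + 2 * a * c + 6 * c ^ 2 = 3 := by linear_combination -h1
  have e2 : 3 * b ^ 2 + 2 * b * d + 6 * d ^ 2 = 6 := by linear_combination -h2
  rcases rep3sol a c e1 with ⟨ea, ec⟩ | ⟨ea, ec⟩ <;>
    rcases rep6sol b d e2 with ⟨eb, ed⟩ | ⟨eb, ed⟩ <;>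
      rw [ea, eb, ec, ed] at hdet h3 <;> revert hdet h3 <;> norm_num

lemma reduce : ∀ (m : ℕ) (Q : BQF), Q.PosDef → Q.disc = -68 → Q.A.toNat ≤ m →
    ∃ R ∈ [(⟨1, 0, 17⟩ : BQF), ⟨2, 2, 9⟩, ⟨3, 2, 6⟩, ⟨3, -2, 6⟩], Q.Equivalent R := by
  intro m
  induction m with
  | zero =>
    rintro Q ⟨hApos, -⟩ - hm
    exact absurd hm (by omega)
  | succ m ih =>
    rintro ⟨A, B, C⟩ ⟨hApos, -⟩ hdisc hm
    simp only at hApos hm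
    have hdisc' : B ^ 2 - 4 * A * C = -68 := hdisc
    set q : ℤ := (B + A) / (2 * A) with hq
    set B' : ℤ := B - 2 * A * q with hB'
    have h2A : 0 < 2 * A := by linarith
    have hmod : B' = (B + A) % (2 * A) - A := by
      rw [Int.emod_def, hB', hq]; ring
    have hBl : -A ≤ B' := by
      have := Int.emod_nonneg (B + A) (ne_of_gt h2A); omega
    have hBu : B' < A := by
      have := Int.emod_lt_of_pos (B + A) h2A; omega
    set n : ℤ := -q with hn
    set C1 : ℤ := A * n ^ 2 + B * n + C with hC1
    have hQ1 : BQF.Equivalent ⟨A, B, C⟩ ⟨A, B', C1⟩ :=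
      BQF.equiv_mk ⟨A, B, C⟩ 1 n 0 1 A B' C1 (by ring)
        (by show A = A * 1 ^ 2 + B * 1 * 0 + C * 0 ^ 2; ring)
        (by show B' = 2 * A * 1 * n + B * (1 * 1 + n * 0) + 2 * C * 0 * 1; rw [hB', hn]; ring)
        (by show C1 = A * n ^ 2 + B * n * 1 + C * 1 ^ 2; rw [hC1]; ring)
    have hd1 : B' ^ 2 - 4 * A * C1 = -68 := by
      rw [hB', hC1, hn]; linear_combination hdisc'
    by_cases hAC : A ≤ C1
    · rcases reduced_cases A B' C1 hApos hBl hBu hAC hd1 with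
        ⟨e1, e2, e3⟩ | ⟨e1, e2, e3⟩ | ⟨e1, e2, e3⟩ | ⟨e1, e2, e3⟩
      · have e : (⟨A, B', C1⟩ : BQF) = ⟨1, 0, 17⟩ := by rw [e1, e2, e3]
        exact ⟨⟨1, 0, 17⟩, by simp, e ▸ hQ1⟩
      · have e : (⟨A, B', C1⟩ : BQF) = ⟨2, -2, 9⟩ := by rw [e1, e2, e3]
        refine ⟨⟨2, 2, 9⟩, by simp, BQF.Equivalent.trans (e ▸ hQ1) ?_⟩
        exact BQF.equiv_mk ⟨2, -2, 9⟩ 1 1 0 1 2 2 9 (by norm_num)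
          (by show (2 : ℤ) = 2 * 1 ^ 2 + -2 * 1 * 0 + 9 * 0 ^ 2; norm_num)
          (by show (2 : ℤ) = 2 * 2 * 1 * 1 + -2 * (1 * 1 + 1 * 0) + 2 * 9 * 0 * 1; norm_num)
          (by show (9 : ℤ) = 2 * 1 ^ 2 + -2 * (1 * 1) + 9 * 1 ^ 2; norm_num)
      · have e : (⟨A, B', C1⟩ : BQF) = ⟨3, 2, 6⟩ := by rw [e1, e2, e3]
        exact ⟨⟨3, 2, 6⟩, by simp, e ▸ hQ1⟩
      · have e : (⟨A, B', C1⟩ : BQF) = ⟨3, -2, 6⟩ := by rw [e1, e2, e3]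
        exact ⟨⟨3, -2, 6⟩, by simp, e ▸ hQ1⟩
    · push_neg at hAC
      have hC1pos : 0 < C1 := by nlinarith [sq_nonneg B']
      have hQ2 : BQF.Equivalent ⟨A, B', C1⟩ ⟨C1, -B', A⟩ :=
        BQF.equiv_mk ⟨A, B', C1⟩ 0 (-1) 1 0 C1 (-B') A (by norm_num)
          (by show C1 = A * 0 ^ 2 + B' * 0 * 1 + C1 * 1 ^ 2; ring)
          (by show -B' = 2 * A * 0 * -1 + B' * (0 * 0 + -1 * 1) + 2 * C1 * 1 * 0; ring)
          (by show A = A * (-1) ^ 2 + B' * -1 * 0 + C1 * 0 ^ 2; ring)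
      obtain ⟨R, hRmem, hR⟩ := ih ⟨C1, -B', A⟩
        ⟨hC1pos, by show (-B') ^ 2 - 4 * C1 * A < 0; nlinarith⟩
        (by show (-B') ^ 2 - 4 * C1 * A = -68; linear_combination hd1)
        (by simp only; omega)
      exact ⟨R, hRmem, (hQ1.trans hQ2).trans hR⟩

/-- There are exactly `4` `SL₂(ℤ)`-orbits of positive definite integral binary quadratic forms
of discriminant `−68`, represented by the pairwise inequivalent forms `x² + 17y²`,
`2x² + 2xy + 9y²`, `3x² + 2xy + 6y²` and `3x² − 2xy + 6y²`: every positive definite form of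
discriminant `−68` is equivalent to exactly one of these. -/
theorem statement8 :
    List.Pairwise (fun R S => ¬ BQF.Equivalent R S)
      [(⟨1, 0, 17⟩ : BQF), ⟨2, 2, 9⟩, ⟨3, 2, 6⟩, ⟨3, -2, 6⟩] ∧
    ∀ Q : BQF, Q.PosDef → Q.disc = -68 →
      ∃! R : BQF, R ∈ [(⟨1, 0, 17⟩ : BQF), ⟨2, 2, 9⟩, ⟨3, 2, 6⟩, ⟨3, -2, 6⟩] ∧
        Q.Equivalent R := by
  constructor
  · refine List.Pairwise.cons ?_ (List.Pairwise.cons ?_ (List.Pairwise.cons ?_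
      (List.Pairwise.cons ?_ List.Pairwise.nil)))
    · intro S hS
      simp only [List.mem_cons, List.not_mem_nil, or_false] at hS
      rcases hS with rfl | rfl | rfl
      · exact ne12
      · exact ne13
      · exact ne14
    · intro S hS
      simp only [List.mem_cons, List.not_mem_nil, or_false] at hS
      rcases hS with rfl | rfl
      · exact ne23
      · exact ne24
    · intro S hS
      simp only [List.mem_cons, List.not_mem_nil, or_false] at hS
      rcases hS with rfl
      exact ne34
    · intro S hS
      simp at hS
  · intro Q hpd hdisc
    obtain ⟨R, hRmem, hR⟩ := reduce Q.A.toNat Q hpd hdisc le_rfl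
    refine ⟨R, ⟨hRmem, hR⟩, ?_⟩
    rintro S ⟨hSmem, hS⟩
    have hSR : S.Equivalent R := hS.symm.trans hR
    have hRS : R.Equivalent S := hR.symm.trans hS
    simp only [List.mem_cons, List.not_mem_nil, or_false] at hSmem hRmem
    rcases hSmem with rfl | rfl | rfl | rfl <;> rcases hRmem with rfl | rfl | rfl | rfl <;>
      first
        | rfl
        | exact absurd hSR ne12 | exact absurd hRS ne12
        | exact absurd hSR ne13 | exact absurd hRS ne13
        | exact absurd hSR ne14 | exact absurd hRS ne14
        | exact absurd hSR ne23 | exact absurd hRS ne23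
        | exact absurd hSR ne24 | exact absurd hRS ne24
        | exact absurd hSR ne34 | exact absurd hRS ne34
end

section
/- Let D < 0 be an integer with D ≡ 0 or 1 mod 4. Then every positive definite integral binary quadratic form of discriminant D is SL₂(ℤ)-equivalent to exactly one reduced form; that is, each SL₂(ℤ)-orbit of positive definite forms of discriminant D contains a unique reduced form. -/
/-- A positive definite form `Ax² + Bxy + Cy²` is reduced if `|B| ≤ A ≤ C`, and moreover
`B ≥ 0` whenever `|B| = A` or `A = C`. -/
def BQF.Reduced (Q : BQF) : Prop :=
  |Q.B| ≤ Q.A ∧ Q.A ≤ Q.C ∧ ((|Q.B| = Q.A ∨ Q.A = Q.C) → 0 ≤ Q.B)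

namespace BQF

/-- Explicit action of a matrix `[[a,b],[c,d]]` on a form. -/
def act (Q : BQF) (a b c d : ℤ) : BQF :=
  ⟨Q.eval a c, 2*Q.A*a*b + Q.B*(a*d + b*c) + 2*Q.C*c*d, Q.eval b d⟩

lemma act_eval (Q : BQF) (a b c d x y : ℤ) :
    (Q.act a b c d).eval x y = Q.eval (a*x + b*y) (c*x + d*y) := by
  simp only [act, eval]; ring

lemma ext3 {Q Q' : BQF} (h1 : Q.A = Q'.A) (h2 : Q.B = Q'.B) (h3 : Q.C = Q'.C) : Q = Q' := by
  cases Q; cases Q'; simp_all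

lemma disc_act (Q : BQF) (a b c d : ℤ) :
    (Q.act a b c d).disc = (a*d - b*c)^2 * Q.disc := by
  simp only [act, disc, eval]; ring

lemma act_id (Q : BQF) : Q.act 1 0 0 1 = Q := by
  apply ext3 <;> simp [act, eval]

lemma act_act (Q : BQF) (a b c d a' b' c' d' : ℤ) :
    (Q.act a b c d).act a' b' c' d' =
      Q.act (a*a'+b*c') (a*b'+b*d') (c*a'+d*c') (c*b'+d*d') := by
  apply ext3 <;> (simp only [act, eval]; ring)

/-- Equivalence in explicit coefficient form. -/
def Equiv' (Q Q' : BQF) : Prop :=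
  ∃ a b c d : ℤ, a*d - b*c = 1 ∧ Q' = Q.act a b c d

lemma equiv'_refl (Q : BQF) : Equiv' Q Q :=
  ⟨1, 0, 0, 1, by ring, (act_id Q).symm⟩

lemma equiv'_trans {Q Q' Q'' : BQF} (h1 : Equiv' Q Q') (h2 : Equiv' Q' Q'') : Equiv' Q Q'' := by
  obtain ⟨a, b, c, d, hdet, rfl⟩ := h1
  obtain ⟨a', b', c', d', hdet', rfl⟩ := h2
  exact ⟨a*a'+b*c', a*b'+b*d', c*a'+d*c', c*b'+d*d',
    by linear_combination (a'*d' - b'*c') * hdet + hdet', (act_act _ _ _ _ _ _ _ _ _)⟩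

lemma equiv'_symm {Q Q' : BQF} (h : Equiv' Q Q') : Equiv' Q' Q := by
  obtain ⟨a, b, c, d, hdet, rfl⟩ := h
  refine ⟨d, -b, -c, a, by linear_combination hdet, ?_⟩
  rw [act_act]
  have e1 : a*d + b*(-c) = 1 := by linear_combination hdet
  have e2 : a*(-b) + b*a = 0 := by ring
  have e3 : c*d + d*(-c) = 0 := by ring
  have e4 : c*(-b) + d*a = 1 := by linear_combination hdet
  rw [e1, e2, e3, e4, act_id]

lemma eq_of_eval_eq {Q Q' : BQF} (h : ∀ x y, Q.eval x y = Q'.eval x y) : Q = Q' := by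
  have h1 := h 1 0; have h2 := h 0 1; have h3 := h 1 1
  simp only [eval] at h1 h2 h3
  apply ext3 <;> nlinarith [h1, h2, h3]

lemma equivalent_iff_equiv' (Q Q' : BQF) : Q.Equivalent Q' ↔ Equiv' Q Q' := by
  constructor
  · rintro ⟨γ, h⟩
    have hdet : (γ : Matrix (Fin 2) (Fin 2) ℤ) 0 0 * (γ : Matrix (Fin 2) (Fin 2) ℤ) 1 1
        - (γ : Matrix (Fin 2) (Fin 2) ℤ) 0 1 * (γ : Matrix (Fin 2) (Fin 2) ℤ) 1 0 = 1 := by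
      have := γ.property
      rwa [Matrix.det_fin_two] at this
    refine ⟨_, _, _, _, hdet, eq_of_eval_eq fun x y => ?_⟩
    rw [act_eval]
    exact h x y
  · rintro ⟨a, b, c, d, hdet, rfl⟩
    refine ⟨⟨!![a, b; c, d], by rw [Matrix.det_fin_two_of]; linarith⟩, fun x y => ?_⟩
    rw [act_eval]
    simp

lemma eval_pos {Q : BQF} (h : Q.PosDef) {x y : ℤ} (hxy : ¬(x = 0 ∧ y = 0)) :
    0 < Q.eval x y := by
  obtain ⟨hA, hD⟩ := h
  simp only [disc] at hD
  rcases eq_or_ne y 0 with rfl | hy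
  · have hx : x ≠ 0 := by tauto
    have h1 : 1 ≤ x^2 := by nlinarith [sq_nonneg x, Int.one_le_abs hx, sq_abs x]
    simp only [eval]
    nlinarith
  · have h1 : 1 ≤ y^2 := by nlinarith [sq_nonneg y, Int.one_le_abs hy, sq_abs y]
    have key : 4*Q.A*Q.eval x y = (2*Q.A*x + Q.B*y)^2 - (Q.B^2 - 4*Q.A*Q.C)*y^2 := by
      simp only [eval]; ring
    nlinarith [sq_nonneg (2*Q.A*x + Q.B*y)]

lemma posdef_act {Q : BQF} (h : Q.PosDef) {a b c d : ℤ} (hdet : a*d - b*c = 1) :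
    (Q.act a b c d).PosDef := by
  have hac : ¬(a = 0 ∧ c = 0) := by rintro ⟨rfl, rfl⟩; simp at hdet
  refine ⟨eval_pos h hac, ?_⟩
  rw [disc_act, hdet]
  simpa using h.2

/-- A reduced positive definite form takes values `≥ C` whenever `y ≠ 0`. -/
lemma C_le_eval {Q : BQF} (hp : Q.PosDef) (hr : Q.Reduced) {x y : ℤ} (hy : y ≠ 0) :
    Q.C ≤ Q.eval x y := by
  have hA : 0 < Q.A := hp.1
  have hBA : |Q.B| ≤ Q.A := hr.1
  have hAC : Q.A ≤ Q.C := hr.2.1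
  have hB1 : -Q.A ≤ Q.B := (abs_le.mp hBA).1
  have hB2 : Q.B ≤ Q.A := (abs_le.mp hBA).2
  have hy1 : 1 ≤ y^2 := by nlinarith [sq_nonneg y, Int.one_le_abs hy, sq_abs y]
  rcases eq_or_ne x 0 with rfl | hx
  · simp only [eval]; nlinarith
  · have hx1 : 1 ≤ x^2 := by nlinarith [sq_nonneg x, Int.one_le_abs hx, sq_abs x]
    simp only [eval]
    rcases le_or_gt 0 Q.B with hB | hB
    · nlinarith [mul_nonneg hB (sq_nonneg (x+y)),
        mul_nonneg (by linarith : (0:ℤ) ≤ 2*Q.A - Q.B) (by linarith : (0:ℤ) ≤ x^2 - 1),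
        mul_nonneg (by linarith : (0:ℤ) ≤ 2*Q.C - Q.B) (by linarith : (0:ℤ) ≤ y^2 - 1)]
    · nlinarith [mul_nonneg (by linarith : (0:ℤ) ≤ -Q.B) (sq_nonneg (x-y)),
        mul_nonneg (by linarith : (0:ℤ) ≤ 2*Q.A + Q.B) (by linarith : (0:ℤ) ≤ x^2 - 1),
        mul_nonneg (by linarith : (0:ℤ) ≤ 2*Q.C + Q.B) (by linarith : (0:ℤ) ≤ y^2 - 1)]

/-- A reduced positive definite form takes values `≥ A` on nonzero vectors. -/
lemma A_le_eval {Q : BQF} (hp : Q.PosDef) (hr : Q.Reduced) {x y : ℤ} (hxy : ¬(x = 0 ∧ y = 0)) :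
    Q.A ≤ Q.eval x y := by
  rcases eq_or_ne y 0 with rfl | hy
  · have hx : x ≠ 0 := by tauto
    have hx1 : 1 ≤ x^2 := by nlinarith [sq_nonneg x, Int.one_le_abs hx, sq_abs x]
    simp only [eval]
    nlinarith [hp.1]
  · exact le_trans hr.2.1 (C_le_eval hp hr hy)

lemma exists_normalize (A B : ℤ) (hA : 0 < A) :
    ∃ m : ℤ, -A ≤ B + 2*A*m ∧ B + 2*A*m ≤ A := by
  have h2 : 0 < 2*A := by linarith
  have hr0 : 0 ≤ B % (2*A) := Int.emod_nonneg B (by linarith)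
  have hr1 : B % (2*A) < 2*A := Int.emod_lt_of_pos B h2
  have hq : 2*A * (B / (2*A)) + B % (2*A) = B := Int.mul_ediv_add_emod B (2*A)
  by_cases hcase : B % (2*A) ≤ A
  · refine ⟨-(B / (2*A)), ?_, ?_⟩ <;>
    · have e : B + 2*A*(-(B / (2*A))) = B % (2*A) := by linear_combination -hq
      rw [e]; linarith
  · refine ⟨-(B / (2*A)) - 1, ?_, ?_⟩ <;>
    · have e : B + 2*A*(-(B / (2*A)) - 1) = B % (2*A) - 2*A := by linear_combination -hq
      rw [e]; linarith

lemma act_A (Q : BQF) (a b c d : ℤ) : (Q.act a b c d).A = Q.eval a c := rfl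
lemma act_B (Q : BQF) (a b c d : ℤ) :
    (Q.act a b c d).B = 2*Q.A*a*b + Q.B*(a*d + b*c) + 2*Q.C*c*d := rfl
lemma act_C (Q : BQF) (a b c d : ℤ) : (Q.act a b c d).C = Q.eval b d := rfl

lemma exists_reduced : ∀ n : ℕ, ∀ Q : BQF, Q.PosDef → Q.A.natAbs ≤ n →
    ∃ R : BQF, R.Reduced ∧ Equiv' Q R := by
  intro n
  induction n using Nat.strong_induction_on with
  | _ n ih =>
  intro Q hQ hn
  have hA : 0 < Q.A := hQ.1
  obtain ⟨m, hm1, hm2⟩ := exists_normalize Q.A Q.B hA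
  set Q1 := Q.act 1 m 0 1 with hQ1def
  have hdet1 : (1:ℤ)*1 - m*0 = 1 := by ring
  have hQ1pos : Q1.PosDef := posdef_act hQ hdet1
  have hA1 : Q1.A = Q.A := by simp [hQ1def, act_A, eval]
  have hB1 : Q1.B = Q.B + 2*Q.A*m := by simp [hQ1def, act_B]; ring
  have hE1 : Equiv' Q Q1 := ⟨1, m, 0, 1, hdet1, rfl⟩
  have hB1a : -Q1.A ≤ Q1.B := by rw [hA1, hB1]; linarith
  have hB1b : Q1.B ≤ Q1.A := by rw [hA1, hB1]; linarith
  have hB1abs : |Q1.B| ≤ Q1.A := abs_le.mpr ⟨hB1a, hB1b⟩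
  have hA1pos : 0 < Q1.A := hQ1pos.1
  have hC1pos : 0 < Q1.C := by
    have h4 : Q1.disc < 0 := hQ1pos.2
    simp only [disc] at h4
    nlinarith [sq_nonneg Q1.B]
  by_cases hC1 : Q1.A ≤ Q1.C
  · -- nearly reduced; fix boundary
    by_cases hB0 : 0 ≤ Q1.B
    · exact ⟨Q1, ⟨hB1abs, hC1, fun _ => hB0⟩, hE1⟩
    · push_neg at hB0
      by_cases hBA : Q1.B = -Q1.A
      · -- translate once more: B ↦ B + 2A = A
        refine ⟨Q1.act 1 1 0 1, ⟨?_, ?_, ?_⟩, equiv'_trans hE1 ⟨1,1,0,1, by ring, rfl⟩⟩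
        · simp only [act_A, act_B, eval]
          rw [hBA]
          rw [abs_of_nonneg (by nlinarith)]
          nlinarith
        · simp only [act_A, act_C, eval]
          nlinarith [hBA]
        · intro _
          simp only [act_B]
          nlinarith [hBA]
      · by_cases hAC : Q1.A = Q1.C
        · -- flip: (A,B,C) ↦ (C,-B,A)
          refine ⟨Q1.act 0 (-1) 1 0, ⟨?_, ?_, ?_⟩, equiv'_trans hE1 ⟨0,-1,1,0, by ring, rfl⟩⟩
          · simp only [act_A, act_B, eval]
            rw [abs_of_nonneg (by nlinarith)]
            have : Q1.B ≠ -Q1.A := hBA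
            nlinarith [abs_le.mp hB1abs]
          · simp only [act_A, act_C, eval]
            nlinarith [hAC]
          · intro _
            simp only [act_B]
            nlinarith
        · exact ⟨Q1, ⟨hB1abs, hC1, fun h => by
            rcases h with h | h
            · exact absurd (by rw [abs_of_neg hB0] at h; linarith : Q1.B = -Q1.A) hBA
            · exact absurd h hAC⟩, hE1⟩
  · -- C1 < A1 : flip and recurse
    push_neg at hC1
    set Q2 := Q1.act 0 (-1) 1 0 with hQ2def
    have hdet2 : (0:ℤ)*0 - (-1)*1 = 1 := by ring
    have hQ2pos : Q2.PosDef := posdef_act hQ1pos hdet2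
    have hA2 : Q2.A = Q1.C := by simp [hQ2def, act_A, eval]
    have hlt : Q2.A.natAbs < n := by
      have h1 : Q2.A < Q.A := by rw [hA2, ← hA1]; exact hC1
      have h2 : 0 < Q2.A := hQ2pos.1
      omega
    obtain ⟨R, hRred, hRE⟩ := ih Q2.A.natAbs hlt Q2 hQ2pos le_rfl
    exact ⟨R, hRred, equiv'_trans (equiv'_trans hE1 ⟨0,-1,1,0, hdet2, rfl⟩) hRE⟩

lemma C_determined {Q Q' : BQF} (hA0 : Q.A ≠ 0) (hA : Q.A = Q'.A) (hB : Q.B = Q'.B)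
    (hd : Q.disc = Q'.disc) : Q = Q' := by
  refine ext3 hA hB ?_
  simp only [disc] at hd
  rw [hA, hB] at hd
  have h4 : Q'.A ≠ 0 := hA ▸ hA0
  have h5 : 4 * Q'.A * Q.C = 4 * Q'.A * Q'.C := by linarith
  have h6 : (4 : ℤ) * Q'.A ≠ 0 := by simp [h4]
  exact mul_left_cancel₀ h6 h5

/-- Two equivalent reduced positive definite forms are equal. -/
lemma reduced_eq {R R' : BQF} (hp : R.PosDef) (hr : R.Reduced) (hr' : R'.Reduced)
    {a b c d : ℤ} (hdet : a*d - b*c = 1) (heq : R' = R.act a b c d) : R' = R := by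
  have hApos : 0 < R.A := hp.1
  have hac : ¬(a = 0 ∧ c = 0) := by rintro ⟨rfl, rfl⟩; simp at hdet
  have hdc : ¬(d = 0 ∧ -c = 0) := by
    rintro ⟨rfl, hc⟩
    rw [neg_eq_zero] at hc
    subst hc
    simp at hdet
  have hp' : R'.PosDef := heq ▸ posdef_act hp hdet
  have hdisc : R'.disc = R.disc := by rw [heq, disc_act, hdet]; ring_nf
  have hinv : R = R'.act d (-b) (-c) a := by
    rw [heq, act_act]
    have e1 : a*d + b*(-c) = 1 := by linear_combination hdet
    have e2 : a*(-b) + b*a = 0 := by ring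
    have e3 : c*d + d*(-c) = 0 := by ring
    have e4 : c*(-b) + d*a = 1 := by linear_combination hdet
    rw [e1, e2, e3, e4, act_id]
  have hA'eval : R'.A = R.eval a c := by rw [heq]; rfl
  have hAeval : R.A = R'.eval d (-c) := by rw [hinv]; rfl
  have h1 : R.A ≤ R'.A := hA'eval ▸ A_le_eval hp hr hac
  have h2 : R'.A ≤ R.A := hAeval ▸ A_le_eval hp' hr' hdc
  have hAA : R'.A = R.A := le_antisymm h2 h1
  by_cases hc : c = 0
  · subst hc
    have had : a*d = 1 := by linarith
    have hB' : R'.B = R.B + 2*R.A*(a*b) := by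
      rw [heq, act_B]
      have e : a*d + b*0 = 1 := by linarith
      rw [e]
      ring
    set k := a*b with hk
    rcases eq_or_ne k 0 with hk0 | hk0
    · refine (C_determined (by linarith) hAA.symm (by rw [hB', hk0]; ring) hdisc.symm).symm
    · exfalso
      obtain ⟨hBl, hBu⟩ := abs_le.mp hr.1
      obtain ⟨hB'l, hB'u⟩ := abs_le.mp hr'.1
      rw [hAA, hB'] at hB'l hB'u
      rcases lt_or_gt_of_ne hk0 with hneg | hpos
      · -- k ≤ -1, so R'.B = -R.A
        have hks : 2*R.A*k ≤ -(2*R.A) := by nlinarith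
        have hBeq : R.B + 2*R.A*k = -R.A := by linarith
        have : 0 ≤ R'.B := by
          apply hr'.2.2
          left
          rw [hB', hBeq, abs_neg, abs_of_pos hApos, hAA]
        rw [hB', hBeq] at this
        linarith
      · -- k ≥ 1, so R.B = -R.A
        have hks : 2*R.A ≤ 2*R.A*k := by nlinarith
        have hBeq : R.B = -R.A := by linarith
        have : 0 ≤ R.B := by
          apply hr.2.2
          left
          rw [hBeq, abs_neg, abs_of_pos hApos]
        linarith
  · -- c ≠ 0 : both forms satisfy A = C and B ≥ 0
    have hCle : R.C ≤ R.eval a c := C_le_eval hp hr hc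
    have hCA : R.A = R.C := by
      rw [← hA'eval, hAA] at hCle
      linarith [hr.2.1]
    have hC'le : R'.C ≤ R'.eval d (-c) := C_le_eval hp' hr' (fun h => hc (neg_eq_zero.mp h))
    have hC'A : R'.A = R'.C := by
      rw [← hAeval, ← hAA] at hC'le
      linarith [hr'.2.1]
    have hB0 : 0 ≤ R.B := hr.2.2 (Or.inr hCA)
    have hB'0 : 0 ≤ R'.B := hr'.2.2 (Or.inr hC'A)
    have hsq : R'.B^2 = R.B^2 := by
      have := hdisc
      simp only [disc] at this
      rw [← hCA, ← hC'A, hAA] at this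
      linarith
    have hBB : R'.B = R.B := by
      rcases le_or_gt R'.B R.B with h | h
      · rcases le_or_gt R.B R'.B with h' | h'
        · linarith
        · exfalso; nlinarith
      · exfalso; nlinarith
    refine ext3 hAA hBB ?_
    rw [← hC'A, ← hCA, hAA]

end BQF

/-- Let `D < 0` with `D ≡ 0` or `1 mod 4`.  Every positive definite integral binary quadratic
form of discriminant `D` is `SL₂(ℤ)`-equivalent to exactly one reduced form. -/
theorem statement9 :
    ∀ D : ℤ, D < 0 → (D % 4 = 0 ∨ D % 4 = 1) →
      ∀ Q : BQF, Q.PosDef → Q.disc = D →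
        ∃! R : BQF, R.Reduced ∧ Q.Equivalent R := by
  intro D _ _ Q hQ _
  obtain ⟨R, hRred, hQR⟩ := BQF.exists_reduced Q.A.natAbs Q hQ le_rfl
  refine ⟨R, ⟨hRred, (BQF.equivalent_iff_equiv' Q R).mpr hQR⟩, ?_⟩
  rintro R' ⟨hR'red, hQR'⟩
  have hE : BQF.Equiv' R R' :=
    BQF.equiv'_trans (BQF.equiv'_symm hQR) ((BQF.equivalent_iff_equiv' Q R').mp hQR')
  obtain ⟨a, b, c, d, hdet, heq⟩ := hE
  have hRpos : R.PosDef := by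
    obtain ⟨a, b, c, d, hdet, rfl⟩ := hQR
    exact BQF.posdef_act hQ hdet
  exact BQF.reduced_eq hRpos hRred hR'red hdet heq
end

section
/- With j : ℍ → ℂ defined by the eta-quotient formula, and writing q = e^{2πiτ}, the function j has q-expansion beginning j(τ) = q⁻¹ + 744 + 196884q + O(q²); precisely, as Im τ → ∞ one has j(τ) − e^{−2πiτ} → 744, and ( j(τ) − e^{−2πiτ} − 744 )·e^{−2πiτ} → 196884. -/
open Complex

/-- The Dedekind eta function `η(τ) = e^{πiτ/12} ∏_{n≥1} (1 − e^{2πinτ})`, defined here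
for all `τ : ℂ` but only of interest on the upper half-plane `Im τ > 0`. -/
noncomputable def η (τ : ℂ) : ℂ :=
  Complex.exp (Real.pi * Complex.I * τ / 12) *
    ∏' n : ℕ, (1 - Complex.exp (2 * Real.pi * Complex.I * (n + 1) * τ))

/-- The modular `j`-function, expressed as an eta quotient:
`j(τ) = η(τ)²⁴/η(2τ)²⁴ + 4096·η(τ)²⁴/η(τ/2)²⁴ − 4096·η(τ/2)²⁴η(2τ)²⁴/η(τ)⁴⁸ + 768`. -/
noncomputable def jEta (τ : ℂ) : ℂ :=
  η τ ^ 24 / η (2 * τ) ^ 24 + 4096 * (η τ ^ 24 / η (τ / 2) ^ 24)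
    - 4096 * (η (τ / 2) ^ 24 * η (2 * τ) ^ 24 / η τ ^ 48) + 768

open Filter Asymptotics

noncomputable def Pf (x : ℂ) : ℂ := ∏' n : ℕ, (1 - x ^ (n + 1))



lemma term_ne_zero {x : ℂ} (hx : ‖x‖ ≤ 1/2) (n : ℕ) : (1 : ℂ) - x ^ (n + 1) ≠ 0 := by
  intro h
  rw [sub_eq_zero] at h
  have : ‖x ^ (n+1)‖ ≤ 1/2 := by
    rw [norm_pow]
    exact le_trans (pow_le_of_le_one (norm_nonneg _) (hx.trans (by norm_num)) (Nat.succ_ne_zero n)) hx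
  rw [← h] at this
  simp at this
  linarith

lemma log_bound {x : ℂ} (hx : ‖x‖ ≤ 1/2) (n : ℕ) :
    ‖Complex.log (1 - x ^ (n + 1))‖ ≤ 3/2 * ‖x‖ ^ (n + 1) := by
  have h := Complex.norm_log_one_add_half_le_self (z := -(x ^ (n+1))) (by
    rw [norm_neg, norm_pow]
    exact le_trans (pow_le_of_le_one (norm_nonneg _) (hx.trans (by norm_num)) (Nat.succ_ne_zero n)) hx)
  simpa [sub_eq_add_neg, norm_pow] using h

lemma summable_log {x : ℂ} (hx : ‖x‖ ≤ 1/2) :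
    Summable fun n : ℕ => Complex.log (1 - x ^ (n + 1)) := by
  have hlt : ‖x‖ < 1 := lt_of_le_of_lt hx (by norm_num)
  apply Summable.of_norm_bounded (g := fun n => 3/2 * ‖x‖ ^ (n + 1)) ?_ (fun n => log_bound hx n)
  have : Summable (fun n : ℕ => (3/2 : ℝ) * (‖x‖ ^ n * ‖x‖)) :=
    ((summable_geometric_of_lt_one (norm_nonneg x) hlt).mul_right _).mul_left _
  simpa [pow_succ] using this

lemma Pf_eq_exp {x : ℂ} (hx : ‖x‖ ≤ 1/2) :
    Pf x = Complex.exp (∑' n : ℕ, Complex.log (1 - x ^ (n + 1))) := by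
  have h := (summable_log hx).hasSum.cexp
  have hfun : (cexp ∘ fun n : ℕ => Complex.log (1 - x ^ (n + 1))) = fun n : ℕ => 1 - x ^ (n + 1) :=
    funext fun n => Complex.exp_log (term_ne_zero hx n)
  rw [hfun] at h
  exact h.tprod_eq


lemma Pf_split {x : ℂ} (hx : ‖x‖ ≤ 1/2) :
    Pf x = (1 - x) * (1 - x^2) *
      Complex.exp (∑' n : ℕ, Complex.log (1 - x ^ (n + 3))) := by
  have hs := summable_log hx
  have h2 := hs.sum_add_tsum_nat_add 2
  have ht : (∑' n : ℕ, Complex.log (1 - x ^ (n + 2 + 1)))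
      = ∑' n : ℕ, Complex.log (1 - x ^ (n + 3)) := by
    apply tsum_congr; intro n; norm_num
  rw [Pf_eq_exp hx, ← h2, Complex.exp_add, ht]
  rw [Finset.sum_range_succ, Finset.sum_range_one, Complex.exp_add]
  rw [Complex.exp_log (term_ne_zero hx 0), Complex.exp_log (term_ne_zero hx 1)]
  norm_num

lemma tail_bound {x : ℂ} (hx : ‖x‖ ≤ 1/2) :
    ‖∑' n : ℕ, Complex.log (1 - x ^ (n + 3))‖ ≤ 3 * ‖x‖ ^ 3 := by
  have hlt : ‖x‖ < 1 := lt_of_le_of_lt hx (by norm_num)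
  have hsum : HasSum (fun n : ℕ => (3/2 : ℝ) * ‖x‖ ^ (n + 3)) ((3/2 * ‖x‖^3) * (1 - ‖x‖)⁻¹) := by
    have hg : HasSum (fun n : ℕ => ‖x‖ ^ n) ((1 - ‖x‖)⁻¹) :=
      hasSum_geometric_of_lt_one (norm_nonneg x) hlt
    have h' := hg.mul_left ((3/2 : ℝ) * ‖x‖^3)
    have h2 : (fun n : ℕ => (3/2:ℝ) * ‖x‖^(n+3)) = fun n : ℕ => (3/2 * ‖x‖^3) * ‖x‖^n :=
      funext fun n => by rw [pow_add]; ring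
    rw [h2]
    exact h'
  have hb : ∀ n : ℕ, ‖Complex.log (1 - x ^ (n + 3))‖ ≤ 3/2 * ‖x‖ ^ (n + 3) := by
    intro n
    have := log_bound hx (n + 2)
    convert this using 3 <;> norm_num
  have h := tsum_of_norm_bounded hsum hb
  refine h.trans ?_
  have hinv : (1 - ‖x‖)⁻¹ ≤ 2 := by
    rw [show (2:ℝ) = (1/2 : ℝ)⁻¹ by norm_num]
    apply inv_anti₀ (by norm_num)
    linarith
  have h3 : (0:ℝ) ≤ ‖x‖^3 := by positivity
  nlinarith

lemma Pf_sub_bound {x : ℂ} (hx : ‖x‖ ≤ 1/2) :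
    ‖Pf x - (1 - x - x^2)‖ ≤ 13 * ‖x‖ ^ 3 := by
  rw [Pf_split hx]
  set T := ∑' n : ℕ, Complex.log (1 - x ^ (n + 3)) with hT
  have htb := tail_bound hx
  have hT1 : ‖T‖ ≤ 1 := by
    have : ‖x‖^3 ≤ (1/2)^3 := pow_le_pow_left₀ (norm_nonneg _) hx 3
    rw [← hT] at htb
    nlinarith
  have hexp : ‖Complex.exp T - 1‖ ≤ 2 * ‖T‖ := Complex.norm_exp_sub_one_le (x := T) hT1
  have hid : (1 - x) * (1 - x^2) * Complex.exp T - (1 - x - x^2)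
      = (1 - x) * (1 - x^2) * (Complex.exp T - 1) + x^3 := by ring
  rw [hid]
  have h1 : ‖(1 - x : ℂ)‖ ≤ 3/2 := le_trans (norm_sub_le _ _) (by rw [norm_one]; linarith)
  have h2 : ‖(1 - x^2 : ℂ)‖ ≤ 5/4 := by
    refine le_trans (norm_sub_le _ _) ?_
    have : ‖x^2‖ ≤ 1/4 := by
      rw [norm_pow]
      nlinarith [norm_nonneg x]
    simp only [norm_one]
    linarith
  calc ‖(1 - x) * (1 - x^2) * (Complex.exp T - 1) + x^3‖
      ≤ ‖(1 - x) * (1 - x^2) * (Complex.exp T - 1)‖ + ‖x^3‖ := norm_add_le _ _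
    _ = ‖(1-x)‖ * ‖(1-x^2)‖ * ‖Complex.exp T - 1‖ + ‖x‖^3 := by rw [norm_mul, norm_mul, norm_pow]
    _ ≤ 13 * ‖x‖ ^ 3 := by
        have htb' : ‖T‖ ≤ 3 * ‖x‖^3 := htb
        have hE : ‖Complex.exp T - 1‖ ≤ 6 * ‖x‖^3 := le_trans hexp (by linarith)
        have hm1 : ‖(1-x:ℂ)‖ * ‖(1-x^2:ℂ)‖ ≤ 3/2 * (5/4) :=
          mul_le_mul h1 h2 (norm_nonneg _) (by norm_num)
        have hm2 : ‖(1-x:ℂ)‖ * ‖(1-x^2:ℂ)‖ * ‖Complex.exp T - 1‖ ≤ 3/2 * (5/4) * (6 * ‖x‖^3) :=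
          mul_le_mul hm1 hE (norm_nonneg _) (by norm_num)
        have h3 : (0:ℝ) ≤ ‖x‖^3 := by positivity
        linarith

noncomputable def Q24 (x : ℂ) : ℂ := (-1472) + (4830)*x + (-6072)*x^2 + (-16192)*x^3 + (78936)*x^4 + (-82731)*x^5 + (-212520)*x^6 + (649704)*x^7 + (-73416)*x^8 + (-1977862)*x^9 + (2034672)*x^10 + (3487260)*x^11 + (-7072408)*x^12 + (-3432198)*x^13 + (15343944)*x^14 + (134596)*x^15 + (-25077360)*x^16 + (6067446)*x^17 + (33474936)*x^18 + (-12286968)*x^19 + (-38228232)*x^20 + (14903725)*x^21 + (38228232)*x^22 + (-12286968)*x^23 + (-33474936)*x^24 + (6067446)*x^25 + (25077360)*x^26 + (134596)*x^27 + (-15343944)*x^28 + (-3432198)*x^29 + (7072408)*x^30 + (3487260)*x^31 + (-2034672)*x^32 + (-1977862)*x^33 + (73416)*x^34 + (649704)*x^35 + (212520)*x^36 + (-82731)*x^37 + (-78936)*x^38 + (-16192)*x^39 + (6072)*x^40 + (4830)*x^41 + (1472)*x^42 + (252)*x^43 + (24)*x^44 + (1)*x^45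

lemma eventually_small : ∀ᶠ x : ℂ in nhds 0, ‖x‖ ≤ 1/2 := by
  filter_upwards [Metric.ball_mem_nhds (0:ℂ) (show (0:ℝ) < 1/2 by norm_num)] with x hx
  rw [Metric.mem_ball, dist_zero_right] at hx
  exact hx.le

lemma hP3 : (fun x : ℂ => Pf x - (1 - x - x^2)) =O[nhds 0] (fun x => x^3) :=
  isBigO_iff.2 ⟨13, by
    filter_upwards [eventually_small] with x hx
    rw [norm_pow]
    exact Pf_sub_bound hx⟩

lemma Pf_sub_one_bound {x : ℂ} (hx : ‖x‖ ≤ 1/2) : ‖Pf x - 1‖ ≤ 5 * ‖x‖ := by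
  have h := Pf_sub_bound hx
  have : Pf x - 1 = (Pf x - (1 - x - x^2)) + (-x - x^2) := by ring
  rw [this]
  refine le_trans (norm_add_le _ _) ?_
  have h2 : ‖(-x - x^2 : ℂ)‖ ≤ ‖x‖ + ‖x‖^2 := by
    refine le_trans (norm_sub_le _ _) ?_
    rw [norm_neg, norm_pow]
  have h3 : ‖x‖^3 ≤ (1/2)^2 * ‖x‖ := by nlinarith [norm_nonneg x]
  nlinarith [norm_nonneg x]

lemma Pf_ne_zero {x : ℂ} (hx : ‖x‖ < 1/5) : Pf x ≠ 0 := by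
  intro h
  have hb := Pf_sub_one_bound (x := x) (by linarith)
  rw [h] at hb
  simp only [zero_sub, norm_neg, norm_one] at hb
  linarith

lemma Pf_tendsto : Tendsto Pf (nhds 0) (nhds 1) := by
  have h : Tendsto (fun x : ℂ => Pf x - 1) (nhds 0) (nhds 0) := by
    refine squeeze_zero_norm' (a := fun x : ℂ => 5 * ‖x‖) ?_ ?_
    · filter_upwards [eventually_small] with x hx
      exact Pf_sub_one_bound hx
    · have h0 : Tendsto (fun x : ℂ => ‖x‖) (nhds 0) (nhds 0) := by
        simpa using (continuous_norm (E := ℂ)).tendsto 0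
      simpa using h0.const_mul (5:ℝ)
  have := h.add_const 1
  simpa using this

lemma pow_sub_isBigO {f g h : ℂ → ℂ} {l : Filter ℂ} (n : ℕ)
    (hf : Tendsto f l (nhds 1)) (hg : Tendsto g l (nhds 1))
    (hfg : (fun x => f x - g x) =O[l] h) :
    (fun x => f x ^ n - g x ^ n) =O[l] h := by
  have hbf : ∀ᶠ x in l, ‖f x‖ ≤ 2 := by
    have := hf.norm.eventually_lt_const (show ‖(1:ℂ)‖ < 2 by simp)
    filter_upwards [this] with x hx using hx.le
  have hbg : ∀ᶠ x in l, ‖g x‖ ≤ 2 := by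
    have := hg.norm.eventually_lt_const (show ‖(1:ℂ)‖ < 2 by simp)
    filter_upwards [this] with x hx using hx.le
  have hsum : (fun x => ∑ i ∈ Finset.range n, f x ^ i * g x ^ (n - 1 - i)) =O[l]
      (fun _ => (1:ℂ)) := by
    refine isBigO_iff.2 ⟨n * 2 ^ n, ?_⟩
    filter_upwards [hbf, hbg] with x h1 h2
    rw [norm_one, mul_one]
    refine le_trans (norm_sum_le _ _) ?_
    have hterm : ∀ i ∈ Finset.range n, ‖f x ^ i * g x ^ (n - 1 - i)‖ ≤ 2 ^ n := by
      intro i hi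
      rw [norm_mul, norm_pow, norm_pow]
      have h1' : ‖f x‖ ^ i ≤ 2 ^ i := pow_le_pow_left₀ (norm_nonneg _) h1 i
      have h2' : ‖g x‖ ^ (n-1-i) ≤ 2 ^ (n-1-i) := pow_le_pow_left₀ (norm_nonneg _) h2 _
      have : (2:ℝ) ^ i * 2 ^ (n-1-i) = 2 ^ (i + (n-1-i)) := (pow_add 2 i _).symm
      have hin := Finset.mem_range.mp hi
      have hle : i + (n - 1 - i) ≤ n := by omega
      calc ‖f x‖ ^ i * ‖g x‖ ^ (n-1-i) ≤ 2 ^ i * 2 ^ (n-1-i) := by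
            exact mul_le_mul h1' h2' (by positivity) (by positivity)
        _ = 2 ^ (i + (n-1-i)) := this
        _ ≤ 2 ^ n := pow_le_pow_right₀ (by norm_num) hle
    refine le_trans (Finset.sum_le_sum hterm) ?_
    rw [Finset.sum_const, Finset.card_range, nsmul_eq_mul]
  have hmul := hsum.mul hfg
  have hid : (fun x => f x ^ n - g x ^ n) =
      fun x => (∑ i ∈ Finset.range n, f x ^ i * g x ^ (n - 1 - i)) * (f x - g x) :=
    funext fun x => (geom_sum₂_mul (f x) (g x) n).symm
  rw [hid]
  refine hmul.congr_right fun x => one_mul _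

lemma poly_id (x : ℂ) : (1 - x - x^2)^24 = 1 - 24*x + 252*x^2 + x^3 * Q24 x := by
  unfold Q24; ring



lemma Q24_cont : Continuous Q24 := by unfold Q24; fun_prop

lemma hg_t : Tendsto (fun x : ℂ => 1 - x - x^2) (nhds 0) (nhds 1) := by
  have h : Continuous (fun x : ℂ => 1 - x - x^2) := by continuity
  simpa using h.tendsto 0

lemma h24 : (fun x : ℂ => Pf x ^ 24 - (1 - 24*x + 252*x^2)) =O[nhds 0] fun x => x^3 := by
  have h1 := pow_sub_isBigO 24 Pf_tendsto hg_t hP3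
  have h2 : (fun x : ℂ => (1-x-x^2)^24 - (1 - 24*x + 252*x^2)) =O[nhds 0] fun x => x^3 := by
    have hQ : Tendsto Q24 (nhds 0) (nhds (Q24 0)) := Q24_cont.tendsto 0
    exact ((isBigO_refl (fun x : ℂ => x^3) (nhds 0)).mul (hQ.isBigO_one ℂ)).congr
      (fun x => by rw [poly_id]; ring) (fun x => mul_one _)
  exact (h1.add h2).congr_left fun x => sub_add_sub_cancel _ _ _

lemma h24t : Tendsto (fun x : ℂ => Pf x ^ 24) (nhds 0) (nhds 1) := by
  simpa using Pf_tendsto.pow 24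

lemma hx32 : (fun x : ℂ => x^3) =O[nhds 0] fun x => x^2 :=
  (isLittleO_pow_pow (by norm_num : 2 < 3)).isBigO

lemma hx21 : (fun x : ℂ => x^2) =O[nhds 0] fun x => x :=
  (by simpa using (isLittleO_pow_pow (by norm_num : 1 < 2)).isBigO :
    (fun x : ℂ => x^2) =O[nhds 0] fun x => x^1).congr_right fun x => pow_one x

lemma h24_2 : (fun x : ℂ => Pf x ^ 24 - (1 - 24*x)) =O[nhds 0] fun x => x^2 := by
  have h252 : (fun x : ℂ => 252*x^2) =O[nhds 0] fun x => x^2 :=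
    (isBigO_refl _ _).const_mul_left 252
  exact ((h24.trans hx32).add h252).congr_left fun x => by ring

lemma h24_1 : (fun x : ℂ => Pf x ^ 24 - 1) =O[nhds 0] fun x => x := by
  have hm : (fun x : ℂ => -(24*x)) =O[nhds 0] fun x => x := by
    simpa using ((isBigO_refl (fun x : ℂ => x) (nhds 0)).const_mul_left 24).neg_left
  refine (((h24_2.trans hx21)).add hm).congr_left fun x => by ring

lemma hsq : Tendsto (fun w : ℂ => w^2) (nhds 0) (nhds 0) := by
  simpa using (continuous_pow 2 (M := ℂ)).tendsto 0

lemma hp4 : Tendsto (fun w : ℂ => w^4) (nhds 0) (nhds 0) := by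
  simpa using (continuous_pow 4 (M := ℂ)).tendsto 0

lemma L_A3 : (fun w : ℂ => Pf (w^2)^24 - (1 - 24*w^2 + 252*w^4)) =O[nhds 0] fun w => w^6 := by
  have h := h24.comp_tendsto hsq
  simp only [Function.comp_def] at h
  exact h.congr (fun w => by ring) (fun w => by ring)

lemma L_B2 : (fun w : ℂ => Pf (w^4)^24 - (1 - 24*w^4)) =O[nhds 0] fun w => w^8 := by
  have h := h24_2.comp_tendsto hp4
  simp only [Function.comp_def] at h
  exact h.congr (fun w => by ring) (fun w => by ring)

lemma L_B1 : (fun w : ℂ => Pf (w^4)^24 - 1) =O[nhds 0] fun w => w^4 := by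
  have h := h24_1.comp_tendsto hp4
  simp only [Function.comp_def] at h
  exact h

lemma L_A1 : (fun w : ℂ => Pf (w^2)^24 - 1) =O[nhds 0] fun w => w^2 := by
  have h := h24_1.comp_tendsto hsq
  simp only [Function.comp_def] at h
  exact h

lemma hw86 : (fun w : ℂ => w^8) =O[nhds 0] fun w => w^6 :=
  (isLittleO_pow_pow (by norm_num : 6 < 8)).isBigO

lemma hw64 : (fun w : ℂ => w^6) =O[nhds 0] fun w => w^4 :=
  (isLittleO_pow_pow (by norm_num : 4 < 6)).isBigO

lemma hw42 : (fun w : ℂ => w^4) =O[nhds 0] fun w => w^2 :=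
  (isLittleO_pow_pow (by norm_num : 2 < 4)).isBigO

lemma N_b : (fun w : ℂ => Pf (w^2)^24 - (1 - 24*w^2 + 276*w^4) * Pf (w^4)^24)
    =O[nhds 0] fun w => w^6 := by
  have hc : Tendsto (fun w : ℂ => 1 - 24*w^2 + 276*w^4) (nhds 0) (nhds 1) := by
    have h : Continuous (fun w : ℂ => 1 - 24*w^2 + 276*w^4) := by continuity
    simpa using h.tendsto 0
  have t2 : (fun w : ℂ => (1 - 24*w^2 + 276*w^4) * (Pf (w^4)^24 - (1 - 24*w^4)))
      =O[nhds 0] fun w => w^6 :=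
    ((hc.isBigO_one ℂ).mul (L_B2.trans hw86)).congr_right fun w => one_mul _
  have t3 : (fun w : ℂ => -576*w^6 + 6624*w^8) =O[nhds 0] fun w => w^6 :=
    ((isBigO_refl (fun w : ℂ => w^6) (nhds 0)).const_mul_left (-576)).add
      ((hw86).const_mul_left 6624)
  exact ((L_A3.sub t2).add t3).congr_left fun w => by ring

lemma N_a : (fun w : ℂ => Pf (w^2)^24 - (1 - 24*w^2) * Pf (w^4)^24)
    =O[nhds 0] fun w => w^4 := by
  have hc : Tendsto (fun w : ℂ => 1 - 24*w^2) (nhds 0) (nhds 1) := by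
    have h : Continuous (fun w : ℂ => 1 - 24*w^2) := by continuity
    simpa using h.tendsto 0
  have t2 : (fun w : ℂ => (1 - 24*w^2) * (Pf (w^4)^24 - 1)) =O[nhds 0] fun w => w^4 :=
    ((hc.isBigO_one ℂ).mul L_B1).congr_right fun w => one_mul _
  have t3 : (fun w : ℂ => 252*w^4) =O[nhds 0] fun w => w^4 :=
    (isBigO_refl _ _).const_mul_left 252
  exact (((L_A3.trans hw64).sub t2).add t3).congr_left fun w => by ring

lemma TA : Tendsto (fun w : ℂ => Pf (w^2)^24) (nhds 0) (nhds 1) := by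
  simpa using (Pf_tendsto.comp hsq).pow 24

lemma TB : Tendsto (fun w : ℂ => Pf (w^4)^24) (nhds 0) (nhds 1) := by
  simpa using (Pf_tendsto.comp hp4).pow 24

lemma N_c : (fun w : ℂ => Pf (w^2)^72 - Pf w ^ 48 * Pf (w^4)^24 - 48*w)
    =O[nhds 0] fun w => w^2 := by
  have cA3 : (fun w : ℂ => (Pf (w^2)^24)^3 - 1) =O[nhds 0] fun w => w^2 := by
    have := pow_sub_isBigO 3 TA (tendsto_const_nhds) (L_A1.congr_left fun w => by ring :
      (fun w : ℂ => Pf (w^2)^24 - (fun _ : ℂ => (1:ℂ)) w) =O[nhds 0] fun w => w^2)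
    exact this.congr_left fun w => by norm_num
  have hct : Tendsto (fun w : ℂ => 1 - 24*w) (nhds 0) (nhds 1) := by
    have h : Continuous (fun w : ℂ => 1 - 24*w) := by continuity
    simpa using h.tendsto 0
  have cC2 : (fun w : ℂ => (Pf w ^ 24)^2 - (1 - 24*w)^2) =O[nhds 0] fun w => w^2 :=
    pow_sub_isBigO 2 h24t hct h24_2
  have b1 : (fun w : ℂ => ((Pf w ^ 24)^2 - (1 - 24*w)^2) * Pf (w^4)^24) =O[nhds 0]
      fun w => w^2 :=
    (cC2.mul (TB.isBigO_one ℂ)).congr_right fun w => mul_one _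
  have b2 : (fun w : ℂ => (1 - 24*w)^2 * (Pf (w^4)^24 - 1)) =O[nhds 0] fun w => w^2 := by
    have hc2 : Tendsto (fun w : ℂ => (1 - 24*w)^2) (nhds 0) (nhds 1) := by
      simpa using hct.pow 2
    exact ((hc2.isBigO_one ℂ).mul (L_B1.trans hw42)).congr_right fun w => one_mul _
  have b3 : (fun w : ℂ => 576*w^2) =O[nhds 0] fun w => w^2 :=
    (isBigO_refl _ _).const_mul_left 576
  exact ((cA3.sub ((b1.add b2).add b3)).congr_left fun w => by ring)

notation "l'" => nhdsWithin (0:ℂ) {(0:ℂ)}ᶜ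

lemma ev_ne : ∀ᶠ w : ℂ in l', w ≠ 0 := by
  filter_upwards [self_mem_nhdsWithin] with w hw using hw

lemma ev_small : ∀ᶠ w : ℂ in l', ‖w‖ < 1/5 := by
  have h : ∀ᶠ w : ℂ in nhds 0, ‖w‖ < 1/5 := by
    filter_upwards [Metric.ball_mem_nhds (0:ℂ) (show (0:ℝ) < 1/5 by norm_num)] with x hx
    rwa [Metric.mem_ball, dist_zero_right] at hx
  exact nhdsWithin_le_nhds h

lemma ev_ne_pows : ∀ᶠ w : ℂ in l', Pf w ≠ 0 ∧ Pf (w^2) ≠ 0 ∧ Pf (w^4) ≠ 0 := by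
  filter_upwards [ev_small] with w hw
  have h1 : ‖w‖ ≤ 1 := by linarith
  have h2 : ‖w^2‖ < 1/5 := by
    rw [norm_pow]
    have := pow_le_of_le_one (norm_nonneg w) h1 (two_ne_zero)
    linarith
  have h4 : ‖w^4‖ < 1/5 := by
    rw [norm_pow]
    have := pow_le_of_le_one (norm_nonneg w) h1 (four_ne_zero)
    linarith
  exact ⟨Pf_ne_zero hw, Pf_ne_zero h2, Pf_ne_zero h4⟩

lemma TBi : Tendsto (fun w : ℂ => (Pf (w^4)^24)⁻¹) l' (nhds 1) := by
  have h0 : Tendsto (fun w : ℂ => Pf (w^4)^24) l' (nhds 1) := TB.mono_left nhdsWithin_le_nhds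
  simpa using h0.inv₀ one_ne_zero

lemma L_a : Tendsto (fun w : ℂ => (Pf (w^2)^24 / Pf (w^4)^24 - 1)/w^2) l' (nhds (-24)) := by
  have T0 : Tendsto (fun w : ℂ => (Pf (w^2)^24 - (1 - 24*w^2) * Pf (w^4)^24)/w^2) l' (nhds 0) :=
    ((N_a.trans_isLittleO (isLittleO_pow_pow (by norm_num : 2 < 4))).mono
      nhdsWithin_le_nhds).tendsto_div_nhds_zero
  have Tmain : Tendsto (fun w : ℂ =>
      (Pf (w^2)^24 - (1 - 24*w^2) * Pf (w^4)^24)/w^2 * (Pf (w^4)^24)⁻¹ - 24) l' (nhds (-24)) := by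
    have := (T0.mul TBi).sub_const 24
    norm_num at this
    exact this
  refine Tmain.congr' ?_
  filter_upwards [ev_ne, ev_ne_pows] with w hw ⟨h1, h2, h4⟩
  field_simp
  ring

lemma L_b : Tendsto (fun w : ℂ => (Pf (w^2)^24 / Pf (w^4)^24 - 1 + 24*w^2)/w^4)
    l' (nhds 276) := by
  have T0 : Tendsto (fun w : ℂ =>
      (Pf (w^2)^24 - (1 - 24*w^2 + 276*w^4) * Pf (w^4)^24)/w^4) l' (nhds 0) :=
    ((N_b.trans_isLittleO (isLittleO_pow_pow (by norm_num : 4 < 6))).mono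
      nhdsWithin_le_nhds).tendsto_div_nhds_zero
  have Tmain : Tendsto (fun w : ℂ =>
      (Pf (w^2)^24 - (1 - 24*w^2 + 276*w^4) * Pf (w^4)^24)/w^4 * (Pf (w^4)^24)⁻¹ + 276)
      l' (nhds 276) := by
    have := (T0.mul TBi).add_const 276
    norm_num at this
    exact this
  refine Tmain.congr' ?_
  filter_upwards [ev_ne, ev_ne_pows] with w hw ⟨h1, h2, h4⟩
  field_simp
  ring

lemma L_c : Tendsto (fun w : ℂ =>
    (Pf (w^2)^24 / Pf w ^ 24 - Pf w ^ 24 * Pf (w^4)^24 / (Pf (w^2)^24)^2)/w)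
    l' (nhds 48) := by
  have T0 : Tendsto (fun w : ℂ =>
      (Pf (w^2)^72 - Pf w ^ 48 * Pf (w^4)^24 - 48*w)/w) l' (nhds 0) := by
    have h1 : (fun w : ℂ => Pf (w^2)^72 - Pf w ^ 48 * Pf (w^4)^24 - 48*w)
        =O[nhds 0] fun w => w^2 := N_c
    have hlo := (isLittleO_pow_pow (by norm_num : 1 < 2) :
      (fun x : ℂ => x ^ 2) =o[nhds 0] fun x => x ^ 1)
    have hlo' : (fun x : ℂ => x^2) =o[nhds 0] fun x => x := by simpa using hlo
    have h2 := h1.trans_isLittleO hlo'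
    exact (h2.mono nhdsWithin_le_nhds).tendsto_div_nhds_zero
  have TM : Tendsto (fun w : ℂ =>
      (Pf (w^2)^72 - Pf w ^ 48 * Pf (w^4)^24)/w) l' (nhds 48) := by
    have h := T0.add_const 48
    norm_num at h
    refine h.congr' ?_
    filter_upwards [ev_ne] with w hw
    field_simp
    ring
  have TCA : Tendsto (fun w : ℂ => (Pf w ^ 24 * Pf (w^2)^48)⁻¹) l' (nhds 1) := by
    have hC : Tendsto (fun w : ℂ => Pf w ^ 24 * Pf (w^2)^48) (nhds 0) (nhds 1) := by
      have hA48 : Tendsto (fun w : ℂ => Pf (w^2)^48) (nhds 0) (nhds 1) := by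
        simpa using (Pf_tendsto.comp hsq).pow 48
      simpa using h24t.mul hA48
    have h0 : Tendsto (fun w : ℂ => Pf w ^ 24 * Pf (w^2)^48) l' (nhds 1) :=
      hC.mono_left nhdsWithin_le_nhds
    simpa using h0.inv₀ one_ne_zero
  have Tmain : Tendsto (fun w : ℂ =>
      (Pf (w^2)^72 - Pf w ^ 48 * Pf (w^4)^24)/w * (Pf w ^ 24 * Pf (w^2)^48)⁻¹)
      l' (nhds 48) := by
    have h := TM.mul TCA
    rwa [show (48:ℂ)*1 = 48 from mul_one _] at h
  refine Tmain.congr' ?_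
  filter_upwards [ev_ne, ev_ne_pows] with w hw ⟨h1, h2, h4⟩
  field_simp

lemma aux1 (w X : ℂ) (hw : w ≠ 0) : (X - 1)/w^2 = X/w^2 - (w^2)⁻¹ := by
  field_simp

lemma aux2 (w X : ℂ) (hw : w ≠ 0) : (X + 24*w^2)/w^4 = (X/w^2) * (w^2)⁻¹ + 24 * (w^2)⁻¹ := by
  field_simp

lemma aux3 (w X : ℂ) (hw : w ≠ 0) : X/w = (w * X) * (w^2)⁻¹ := by
  field_simp

lemma alg1 (w A B C : ℂ) (hw : w ≠ 0) (ha : A ≠ 0) (hb : B ≠ 0) (hc : C ≠ 0) :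
    (w^2 * B) / (w^4 * C) + 4096 * ((w^2 * B) / (w * A))
      - 4096 * ((w * A) * (w^4 * C) / (w^4 * B^2)) + 768 - (w^2)⁻¹
    = (B / C - 1)/w^2 + 4096*(w*(B / A - A * C / B^2)) + 768 := by
  have h1 : (w^2 * B) / (w^4 * C) = (B/C)/w^2 := by field_simp
  have h2 : (w^2 * B) / (w * A) = w * (B/A) := by field_simp
  have h3 : (w * A) * (w^4 * C) / (w^4 * B^2) = w * (A * C / B^2) := by field_simp
  rw [h1, h2, h3, aux1 w (B/C) hw]
  ring

lemma alg2 (w A B C : ℂ) (hw : w ≠ 0) :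
    ((B / C - 1)/w^2 + 4096*(w*(B / A - A * C / B^2)) + 768 - 744) * (w^2)⁻¹
    = (B / C - 1 + 24*w^2)/w^4 + 4096*((B / A - A * C / B^2)/w) := by
  have h1 := aux2 w (B/C - 1) hw
  have h2 := aux3 w (B / A - A * C / B^2) hw
  rw [h1, h2]
  ring


lemma eta_eq (τ : ℂ) : η τ = Complex.exp (↑Real.pi * I * τ / 12)
    * Pf (Complex.exp (2 * ↑Real.pi * I * τ)) := by
  unfold Pf η
  congr 1
  apply tprod_congr
  intro n
  congr 1
  rw [← Complex.exp_nat_mul]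
  congr 1
  push_cast
  ring

lemma eta24 (τ : ℂ) : η τ ^ 24 = Complex.exp (↑Real.pi * I * τ) ^ 2
    * Pf (Complex.exp (↑Real.pi * I * τ) ^ 2) ^ 24 := by
  have h1 : Complex.exp (↑Real.pi*I*τ/12)^24 = Complex.exp (↑Real.pi*I*τ)^2 := by
    rw [← Complex.exp_nat_mul, ← Complex.exp_nat_mul]; congr 1; push_cast; ring
  have h2 : Complex.exp (2*↑Real.pi*I*τ) = Complex.exp (↑Real.pi*I*τ)^2 := by
    rw [← Complex.exp_nat_mul]; congr 1; push_cast; ring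
  rw [eta_eq, mul_pow, h1, h2]

lemma eta2tau24 (τ : ℂ) : η (2*τ) ^ 24 = Complex.exp (↑Real.pi * I * τ) ^ 4
    * Pf (Complex.exp (↑Real.pi * I * τ) ^ 4) ^ 24 := by
  have h1 : Complex.exp (↑Real.pi*I*(2*τ)/12)^24 = Complex.exp (↑Real.pi*I*τ)^4 := by
    rw [← Complex.exp_nat_mul, ← Complex.exp_nat_mul]; congr 1; push_cast; ring
  have h2 : Complex.exp (2*↑Real.pi*I*(2*τ)) = Complex.exp (↑Real.pi*I*τ)^4 := by
    rw [← Complex.exp_nat_mul]; congr 1; push_cast; ring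
  rw [eta_eq, mul_pow, h1, h2]

lemma etahalf24 (τ : ℂ) : η (τ/2) ^ 24 = Complex.exp (↑Real.pi * I * τ)
    * Pf (Complex.exp (↑Real.pi * I * τ)) ^ 24 := by
  have h1 : Complex.exp (↑Real.pi*I*(τ/2)/12)^24 = Complex.exp (↑Real.pi*I*τ) := by
    rw [← Complex.exp_nat_mul]; congr 1; push_cast; ring
  have h2 : Complex.exp (2*↑Real.pi*I*(τ/2)) = Complex.exp (↑Real.pi*I*τ) := by
    congr 1; ring
  rw [eta_eq, mul_pow, h1, h2]

lemma eta48 (τ : ℂ) : η τ ^ 48 = Complex.exp (↑Real.pi * I * τ) ^ 4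
    * (Pf (Complex.exp (↑Real.pi * I * τ) ^ 2) ^ 24) ^ 2 := by
  rw [show (48:ℕ) = 24*2 by norm_num, pow_mul, eta24]
  ring

lemma exp_neg2 (τ : ℂ) : Complex.exp (-(2 * ↑Real.pi * I * τ))
    = (Complex.exp (↑Real.pi * I * τ) ^ 2)⁻¹ := by
  rw [Complex.exp_neg]
  congr 1
  rw [← Complex.exp_nat_mul]
  congr 1
  push_cast
  ring

lemma small_imp {w : ℂ} (hw : ‖w‖ < 1/5) : Pf w ≠ 0 ∧ Pf (w^2) ≠ 0 ∧ Pf (w^4) ≠ 0 := by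
  have h1 : ‖w‖ ≤ 1 := by linarith
  have h2 : ‖w^2‖ < 1/5 := by
    rw [norm_pow]
    have := pow_le_of_le_one (norm_nonneg w) h1 (two_ne_zero)
    linarith
  have h4 : ‖w^4‖ < 1/5 := by
    rw [norm_pow]
    have := pow_le_of_le_one (norm_nonneg w) h1 (four_ne_zero)
    linarith
  exact ⟨Pf_ne_zero hw, Pf_ne_zero h2, Pf_ne_zero h4⟩

lemma key1 (τ : ℂ) (hs : ‖Complex.exp (↑Real.pi * I * τ)‖ < 1/5) :
    jEta τ - Complex.exp (-(2 * ↑Real.pi * I * τ)) =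
      (fun w : ℂ => (Pf (w^2)^24 / Pf (w^4)^24 - 1)/w^2
        + 4096*(w*(Pf (w^2)^24 / Pf w ^ 24 - Pf w ^ 24 * Pf (w^4)^24 / (Pf (w^2)^24)^2)) + 768)
      (Complex.exp (↑Real.pi * I * τ)) := by
  obtain ⟨h1, h2, h4⟩ := small_imp hs
  have hw : Complex.exp (↑Real.pi * I * τ) ≠ 0 := Complex.exp_ne_zero _
  unfold jEta
  rw [eta24, eta2tau24, etahalf24, eta48, exp_neg2]
  exact alg1 _ _ _ _ hw (pow_ne_zero _ h1) (pow_ne_zero _ h2) (pow_ne_zero _ h4)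

lemma key2 (τ : ℂ) (hs : ‖Complex.exp (↑Real.pi * I * τ)‖ < 1/5) :
    (jEta τ - Complex.exp (-(2 * ↑Real.pi * I * τ)) - 744)
        * Complex.exp (-(2 * ↑Real.pi * I * τ)) =
      (fun w : ℂ => (Pf (w^2)^24 / Pf (w^4)^24 - 1 + 24*w^2)/w^4
        + 4096*((Pf (w^2)^24 / Pf w ^ 24 - Pf w ^ 24 * Pf (w^4)^24 / (Pf (w^2)^24)^2)/w))
      (Complex.exp (↑Real.pi * I * τ)) := by
  have hw : Complex.exp (↑Real.pi * I * τ) ≠ 0 := Complex.exp_ne_zero _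
  rw [key1 τ hs, exp_neg2]
  exact alg2 _ _ _ _ hw

lemma T1 : Tendsto (fun w : ℂ => (Pf (w^2)^24 / Pf (w^4)^24 - 1)/w^2
    + 4096*(w*(Pf (w^2)^24 / Pf w ^ 24 - Pf w ^ 24 * Pf (w^4)^24 / (Pf (w^2)^24)^2)) + 768)
    l' (nhds 744) := by
  have hA' : Tendsto (fun w : ℂ => Pf (w^2)^24) l' (nhds 1) := TA.mono_left nhdsWithin_le_nhds
  have hB' : Tendsto (fun w : ℂ => Pf (w^4)^24) l' (nhds 1) := TB.mono_left nhdsWithin_le_nhds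
  have hC' : Tendsto (fun w : ℂ => Pf w ^ 24) l' (nhds 1) := h24t.mono_left nhdsWithin_le_nhds
  have TR : Tendsto (fun w : ℂ => Pf (w^2)^24 / Pf w ^ 24
      - Pf w ^ 24 * Pf (w^4)^24 / (Pf (w^2)^24)^2) l' (nhds 0) := by
    have h := (hA'.div hC' one_ne_zero).sub ((hC'.mul hB').div (hA'.pow 2) (by norm_num))
    rw [show (1:ℂ)/1 - 1*1/1^2 = 0 by norm_num] at h
    exact h
  have hw0 : Tendsto (fun w : ℂ => w) l' (nhds 0) := tendsto_id.mono_right nhdsWithin_le_nhds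
  have hmul : Tendsto (fun w : ℂ => w * (Pf (w^2)^24 / Pf w ^ 24
      - Pf w ^ 24 * Pf (w^4)^24 / (Pf (w^2)^24)^2)) l' (nhds 0) := by
    have h := hw0.mul TR
    rw [show (0:ℂ)*0 = 0 by norm_num] at h
    exact h
  have h := (L_a.add (Tendsto.const_mul (4096:ℂ) hmul)).add_const 768
  rw [show (-24:ℂ) + 4096*0 + 768 = 744 by norm_num] at h
  exact h

lemma T2 : Tendsto (fun w : ℂ => (Pf (w^2)^24 / Pf (w^4)^24 - 1 + 24*w^2)/w^4
    + 4096*((Pf (w^2)^24 / Pf w ^ 24 - Pf w ^ 24 * Pf (w^4)^24 / (Pf (w^2)^24)^2)/w))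
    l' (nhds 196884) := by
  have h := L_b.add (Tendsto.const_mul (4096:ℂ) L_c)
  rw [show (276:ℂ) + 4096*48 = 196884 by norm_num] at h
  exact h

lemma hm0 : Tendsto (fun τ : ℂ => Complex.exp (↑Real.pi * I * τ))
    (Filter.comap Complex.im Filter.atTop) (nhds 0) := by
  rw [tendsto_zero_iff_norm_tendsto_zero]
  have hnorm : ∀ τ : ℂ, ‖cexp (↑Real.pi * I * τ)‖ = Real.exp (-(Real.pi * τ.im)) := by
    intro τ
    rw [Complex.norm_exp]
    congr 1
    simp [Complex.mul_re, Complex.mul_im]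
  simp only [hnorm]
  have h1 : Tendsto (fun τ : ℂ => τ.im) (Filter.comap Complex.im Filter.atTop) Filter.atTop :=
    tendsto_comap
  have h2 : Tendsto (fun t : ℝ => Real.exp (-(Real.pi * t))) Filter.atTop (nhds 0) := by
    apply Real.tendsto_exp_atBot.comp
    have h3 : Tendsto (fun t : ℝ => Real.pi * t) Filter.atTop Filter.atTop :=
      Filter.Tendsto.const_mul_atTop Real.pi_pos tendsto_id
    exact tendsto_neg_atTop_atBot.comp h3
  exact h2.comp h1

lemma hm : Tendsto (fun τ : ℂ => Complex.exp (↑Real.pi * I * τ))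
    (Filter.comap Complex.im Filter.atTop) (nhdsWithin (0:ℂ) {(0:ℂ)}ᶜ) := by
  rw [tendsto_nhdsWithin_iff]
  refine ⟨hm0, Eventually.of_forall fun τ => ?_⟩
  simp only [Set.mem_compl_iff, Set.mem_singleton_iff]
  exact Complex.exp_ne_zero _

open Filter in
/-- With `q = e^{2πiτ}`, the `q`-expansion of `j` begins `q⁻¹ + 744 + 196884q + O(q²)`:
as `Im τ → ∞` one has `j(τ) − e^{−2πiτ} → 744` and
`( j(τ) − e^{−2πiτ} − 744 )·e^{−2πiτ} → 196884`. -/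
theorem statement19 :
    Tendsto (fun τ : ℂ => jEta τ - Complex.exp (-(2 * Real.pi * Complex.I * τ)))
      (Filter.comap Complex.im Filter.atTop) (nhds 744) ∧
    Tendsto
      (fun τ : ℂ =>
        (jEta τ - Complex.exp (-(2 * Real.pi * Complex.I * τ)) - 744) *
          Complex.exp (-(2 * Real.pi * Complex.I * τ)))
      (Filter.comap Complex.im Filter.atTop) (nhds 196884) := by
  have hev : ∀ᶠ τ in Filter.comap Complex.im Filter.atTop,
      ‖Complex.exp (↑Real.pi * I * τ)‖ < 1/5 := by
    have h := hm0 (Metric.ball_mem_nhds (0:ℂ) (show (0:ℝ) < 1/5 by norm_num))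
    filter_upwards [h] with τ hτ
    rwa [Set.mem_preimage, Metric.mem_ball, dist_zero_right] at hτ
  constructor
  · refine (T1.comp hm).congr' ?_
    filter_upwards [hev] with τ hτ
    exact (key1 τ hτ).symm
  · refine (T2.comp hm).congr' ?_
    filter_upwards [hev] with τ hτ
    exact (key2 τ hτ).symm
end
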